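/- arXiv:1501.00051 — 3 statements merged into one kernel-verified Lean document; each statement's English description precedes it below -/
import Mathlib

section
/- Fix m, n ≥ 1 and consider the graph on S = [m]^n whose edges join s and F_i(s) whenever F_i(s) ≠ 0 (equivalently, join s and E_i(s) whenever E_i(s) ≠ 0), for i ∈ [m−1]. Then each connected component of this graph contains exactly one vertex v such that E_i(v) = 0 for every i ∈ [m−1]. -/
/-! ### Crystal operators on words -/

/-- The number of `i`'s minus the number of `(i+1)`'s among the first `k` letters of `w`
(viewing each `i` as a closing parenthesis and each `i+1` as an opening parenthesis). -/
def prefD (i : ℕ) (w : List ℕ) (k : ℕ) : ℤ :=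
  ((w.take k).count i : ℤ) - ((w.take k).count (i + 1) : ℤ)

/-- The number of `(i+1)`'s minus the number of `i`'s in the suffix of `w` starting at
position `k`. -/
def suffD (i : ℕ) (w : List ℕ) (k : ℕ) : ℤ :=
  ((w.drop k).count (i + 1) : ℤ) - ((w.drop k).count i : ℤ)

/-- Position `p` of `w` holds a letter `i` which, viewed as a closing parenthesis
(each `i+1` being an opening parenthesis, all other letters ignored), is unmatched in the
usual parenthesis matching. -/
def IsUnmatchedClose (i : ℕ) (w : List ℕ) (p : ℕ) : Prop :=
  w[p]? = some i ∧ ∀ q ≤ p, prefD i w q < prefD i w (p + 1)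

/-- Position `p` of `w` holds a letter `i+1` which, viewed as an opening parenthesis
(each `i` being a closing parenthesis, all other letters ignored), is unmatched in the
usual parenthesis matching. -/
def IsUnmatchedOpen (i : ℕ) (w : List ℕ) (p : ℕ) : Prop :=
  w[p]? = some (i + 1) ∧ ∀ q ≤ w.length, p < q → suffD i w q < suffD i w p

instance (i : ℕ) (w : List ℕ) (p : ℕ) : Decidable (IsUnmatchedClose i w p) := by
  unfold IsUnmatchedClose; infer_instance

instance (i : ℕ) (w : List ℕ) (p : ℕ) : Decidable (IsUnmatchedOpen i w p) := by
  unfold IsUnmatchedOpen; infer_instance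

/-- The (increasing) list of positions of unmatched `i`'s (closing parentheses) of `w`. -/
def unmatchedCloses (i : ℕ) (w : List ℕ) : List ℕ :=
  (List.range w.length).filter fun p => decide (IsUnmatchedClose i w p)

/-- The (increasing) list of positions of unmatched `(i+1)`'s (opening parentheses) of `w`. -/
def unmatchedOpens (i : ℕ) (w : List ℕ) : List ℕ :=
  (List.range w.length).filter fun p => decide (IsUnmatchedOpen i w p)

/-- The crystal operator `F_i` on words: replace the rightmost unmatched `i` by `i+1`;
`none` (i.e. `0`) if every `i` is matched. -/
def Fop (i : ℕ) (w : List ℕ) : Option (List ℕ) :=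
  match (unmatchedCloses i w).getLast? with
  | none => none
  | some p => some (w.set p (i + 1))

/-- The crystal operator `E_i` on words: replace the leftmost unmatched `i+1` by `i`;
`none` (i.e. `0`) if every `i+1` is matched. -/
def Eop (i : ℕ) (w : List ℕ) : Option (List ℕ) :=
  match (unmatchedOpens i w).head? with
  | none => none
  | some p => some (w.set p i)

/-- `s` is a string over the alphabet `{1, …, m}`. -/
def IsWordOver (m : ℕ) (s : List ℕ) : Prop := ∀ x ∈ s, 1 ≤ x ∧ x ≤ m

/-- Two words are joined by an edge colored `i` (for some `i ∈ [m-1]`) of the crystal graph on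
words: one is the image of the other under `F_i`. -/
def wordEdge (m : ℕ) (u v : List ℕ) : Prop :=
  ∃ i, 1 ≤ i ∧ i < m ∧ (Fop i u = some v ∨ Fop i v = some u)

/-- `v` lies in the connected component of `u` in the crystal graph on words. -/
def wordComp (m : ℕ) (u v : List ℕ) : Prop :=
  Relation.ReflTransGen (wordEdge m) u v

section Infra

theorem prefD_zero (i : ℕ) (w : List ℕ) : prefD i w 0 = 0 := by simp [prefD]

theorem prefD_succ (i : ℕ) (w : List ℕ) (k : ℕ) :
    prefD i w (k+1) = prefD i w k + (if w[k]? = some i then 1 else 0)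
      - (if w[k]? = some (i+1) then 1 else 0) := by
  unfold prefD
  rw [List.take_succ]
  rcases h : w[k]? with _ | a
  · simp
  · simp only [Option.toList_some, List.count_append, List.count_singleton,
      Option.some.injEq]
    push_cast
    by_cases h1 : a = i <;> by_cases h2 : a = i+1 <;>
      simp [h1, h2, beq_iff_eq] <;> omega

theorem prefD_of_le (i : ℕ) (w : List ℕ) {k : ℕ} (h : w.length ≤ k) :
    prefD i w k = prefD i w w.length := by
  unfold prefD
  rw [List.take_of_length_le h, List.take_of_length_le le_rfl]

end Infra
section Infra2

theorem letter_of_step_down {i : ℕ} {w : List ℕ} {k : ℕ}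
    (h : prefD i w (k+1) < prefD i w k) : w[k]? = some (i+1) := by
  have := prefD_succ i w k
  split_ifs at this <;> first | assumption | omega

theorem letter_of_step_up {i : ℕ} {w : List ℕ} {k : ℕ}
    (h : prefD i w k < prefD i w (k+1)) : w[k]? = some i := by
  have := prefD_succ i w k
  split_ifs at this <;> first | assumption | omega

theorem step_of_letter {i a : ℕ} {w : List ℕ} {k : ℕ} (h : w[k]? = some a) :
    prefD i w (k+1) = prefD i w k + (if a = i then 1 else 0)
      - (if a = i+1 then 1 else 0) := by
  rw [prefD_succ, h]
  simp only [Option.some.injEq]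

/-- How `prefD` changes when one letter is replaced. -/
theorem prefD_set {w : List ℕ} {p a : ℕ} (h : w[p]? = some a) (i b k : ℕ) :
    prefD i (w.set p b) k = prefD i w k +
      (if p < k then ((if b = i then 1 else 0) - (if b = i+1 then 1 else 0)
        + (if a = i+1 then 1 else 0) - (if a = i then 1 else 0) : ℤ) else 0) := by
  have hp : p < w.length := (List.getElem?_eq_some_iff.mp h).1
  induction k with
  | zero => simp [prefD_zero]
  | succ k ih =>
    have hset : (w.set p b)[k]? = if p = k then some b else w[k]? := by
      rw [List.getElem?_set]
      split_ifs with h1 h2 <;> first | rfl | omega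
    by_cases hpk : p = k
    · subst hpk
      rw [step_of_letter (show (w.set p b)[p]? = some b by simp [hset]), step_of_letter h, ih]
      split_ifs <;> omega
    · rcases hk : w[k]? with _ | c
      · rw [prefD_succ, prefD_succ, hset, ih, hk]
        simp only [if_neg hpk]
        split_ifs <;> omega
      · rw [step_of_letter (by simp [hset, hpk, hk] : (w.set p b)[k]? = some c),
          step_of_letter hk, ih]
        split_ifs <;> omega

end Infra2
section Spec

theorem exists_lastArgmax (f : ℕ → ℤ) (n : ℕ) :
    ∃ p, p ≤ n ∧ (∀ q ≤ n, f q ≤ f p) ∧ ∀ q ≤ n, p < q → f q < f p := by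
  induction n with
  | zero =>
    refine ⟨0, le_rfl, fun q hq => ?_, fun q hq h => absurd hq (by omega)⟩
    obtain rfl : q = 0 := by omega
    exact le_rfl
  | succ n ih =>
    obtain ⟨p, hp, hmax, hlast⟩ := ih
    by_cases h : f p ≤ f (n+1)
    · refine ⟨n+1, le_rfl, fun q hq => ?_, fun q hq hpq => absurd hq (by omega)⟩
      by_cases hq' : q ≤ n
      · exact (hmax q hq').trans h
      · obtain rfl : q = n+1 := by omega
        exact le_rfl
    · refine ⟨p, by omega, fun q hq => ?_, fun q hq hpq => ?_⟩
      · by_cases hq' : q ≤ n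
        · exact hmax q hq'
        · obtain rfl : q = n+1 := by omega
          omega
      · by_cases hq' : q ≤ n
        · exact hlast q hq' hpq
        · obtain rfl : q = n+1 := by omega
          omega

theorem exists_firstArgmax (f : ℕ → ℤ) (n : ℕ) :
    ∃ p, p ≤ n ∧ (∀ q ≤ n, f q ≤ f p) ∧ ∀ q < p, f q < f p := by
  induction n with
  | zero =>
    refine ⟨0, le_rfl, fun q hq => ?_, fun q hq => absurd hq (by omega)⟩
    obtain rfl : q = 0 := by omega
    exact le_rfl
  | succ n ih =>
    obtain ⟨p, hp, hmax, hfirst⟩ := ih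
    by_cases h : f (n+1) ≤ f p
    · refine ⟨p, by omega, fun q hq => ?_, hfirst⟩
      by_cases hq' : q ≤ n
      · exact hmax q hq'
      · obtain rfl : q = n+1 := by omega
        exact h
    · refine ⟨n+1, le_rfl, fun q hq => ?_, fun q hq => ?_⟩
      · by_cases hq' : q ≤ n
        · exact (hmax q hq').trans (by omega)
        · obtain rfl : q = n+1 := by omega
          exact le_rfl
      · exact lt_of_le_of_lt (hmax q (by omega)) (by omega)

/-- `suffD` in terms of `prefD`. -/
theorem suffD_eq_prefD (i : ℕ) (w : List ℕ) {k : ℕ} (hk : k ≤ w.length) :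
    suffD i w k = ((w.count (i+1) : ℤ) - (w.count i : ℤ)) + prefD i w k := by
  unfold suffD prefD
  have h1 : w.count (i+1) = (w.take k).count (i+1) + (w.drop k).count (i+1) := by
    conv_lhs => rw [← List.take_append_drop k w]
    rw [List.count_append]
  have h2 : w.count i = (w.take k).count i + (w.drop k).count i := by
    conv_lhs => rw [← List.take_append_drop k w]
    rw [List.count_append]
  push_cast [h1, h2]
  ring

theorem filter_range_head?_eq {P : ℕ → Prop} [DecidablePred P] {N p : ℕ}
    (h1 : p < N) (h2 : P p) (h3 : ∀ q < p, ¬ P q) :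
    ((List.range N).filter (fun x => decide (P x))).head? = some p := by
  obtain ⟨m, rfl⟩ : ∃ m, N = p + (m + 1) := ⟨N - p - 1, by omega⟩
  rw [List.range_add, List.filter_append]
  have hnil : (List.range p).filter (fun x => decide (P x)) = [] := by
    rw [List.filter_eq_nil_iff]
    intro a ha
    simp only [List.mem_range] at ha
    simpa using h3 a ha
  rw [hnil, List.nil_append]
  have : List.range (m+1) = 0 :: (List.range m).map Nat.succ := List.range_succ_eq_map
  rw [this]
  simp only [List.map_cons, Nat.add_zero, List.filter_cons]
  rw [if_pos (by simpa using h2)]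
  rfl

theorem filter_range_getLast?_eq {P : ℕ → Prop} [DecidablePred P] {N p : ℕ}
    (h1 : p < N) (h2 : P p) (h3 : ∀ q, p < q → q < N → ¬ P q) :
    ((List.range N).filter (fun x => decide (P x))).getLast? = some p := by
  induction N with
  | zero => omega
  | succ N ih =>
    rw [List.range_succ, List.filter_append]
    by_cases hpN : p = N
    · subst hpN
      simp only [List.filter_cons, List.filter_nil]
      rw [if_pos (by simpa using h2)]
      exact List.getLast?_concat
    · have hN : ¬ P N := h3 N (by omega) (by omega)
      simp only [List.filter_cons, List.filter_nil]
      rw [if_neg (by simpa using hN), List.append_nil]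
      exact ih (by omega) (fun q hq hqN => h3 q hq (by omega))

theorem filter_range_nil {P : ℕ → Prop} [DecidablePred P] {N : ℕ}
    (h : ∀ q < N, ¬ P q) :
    ((List.range N).filter (fun x => decide (P x))) = [] := by
  rw [List.filter_eq_nil_iff]
  intro a ha
  simp only [List.mem_range] at ha
  simpa using h a ha

end Spec
section OpSpec

theorem Eop_eq_some_of {i : ℕ} {w : List ℕ} {p : ℕ} (hp : p < w.length)
    (hmax : ∀ q ≤ w.length, prefD i w q ≤ prefD i w p)
    (hlast : ∀ q ≤ w.length, p < q → prefD i w q < prefD i w p) :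
    w[p]? = some (i+1) ∧ Eop i w = some (w.set p i) := by
  have hlet : w[p]? = some (i+1) :=
    letter_of_step_down (hlast (p+1) (by omega) (by omega))
  have hopen : IsUnmatchedOpen i w p := by
    refine ⟨hlet, fun q hq hpq => ?_⟩
    rw [suffD_eq_prefD i w hq, suffD_eq_prefD i w (le_of_lt hp)]
    have := hlast q hq hpq
    omega
  have hmin : ∀ q < p, ¬ IsUnmatchedOpen i w q := by
    intro q hq hopen'
    have h1 := hopen'.2 p (le_of_lt hp) hq
    rw [suffD_eq_prefD i w (le_of_lt hp), suffD_eq_prefD i w (by omega)] at h1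
    have := hmax q (by omega)
    omega
  have hhead : (unmatchedOpens i w).head? = some p :=
    filter_range_head?_eq hp hopen hmin
  exact ⟨hlet, by unfold Eop; rw [hhead]⟩

theorem Eop_eq_none_of {i : ℕ} {w : List ℕ}
    (hmax : ∀ q ≤ w.length, prefD i w q ≤ prefD i w w.length) :
    Eop i w = none := by
  have : (unmatchedOpens i w) = [] := by
    apply filter_range_nil
    intro q hq hopen
    have h1 := hopen.2 w.length le_rfl hq
    rw [suffD_eq_prefD i w le_rfl, suffD_eq_prefD i w (by omega)] at h1
    have := hmax q (by omega)
    omega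
  unfold Eop
  rw [this]
  rfl

theorem Eop_cases (i : ℕ) (w : List ℕ) :
    Eop i w = none ∨ ∃ p, p < w.length ∧ w[p]? = some (i+1) ∧
      (∀ q ≤ w.length, prefD i w q ≤ prefD i w p) ∧
      (∀ q ≤ w.length, p < q → prefD i w q < prefD i w p) ∧
      Eop i w = some (w.set p i) := by
  obtain ⟨p, hp, hmax, hlast⟩ := exists_lastArgmax (prefD i w) w.length
  by_cases hplen : p < w.length
  · obtain ⟨h1, h2⟩ := Eop_eq_some_of hplen hmax hlast
    exact Or.inr ⟨p, hplen, h1, hmax, hlast, h2⟩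
  · obtain rfl : p = w.length := by omega
    exact Or.inl (Eop_eq_none_of hmax)

theorem Fop_eq_some_of {i : ℕ} {w : List ℕ} {p : ℕ} (hp : p < w.length)
    (hmax : ∀ q ≤ w.length, prefD i w q ≤ prefD i w (p+1))
    (hfirst : ∀ q ≤ p, prefD i w q < prefD i w (p+1)) :
    w[p]? = some i ∧ Fop i w = some (w.set p (i+1)) := by
  have hlet : w[p]? = some i := letter_of_step_up (hfirst p le_rfl)
  have hclose : IsUnmatchedClose i w p := ⟨hlet, hfirst⟩
  have hmaxl : ∀ q, p < q → q < w.length → ¬ IsUnmatchedClose i w q := by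
    intro q hpq hq hclose'
    have h1 := hclose'.2 (p+1) (by omega)
    have := hmax (q+1) (by omega)
    omega
  have hlast : (unmatchedCloses i w).getLast? = some p :=
    filter_range_getLast?_eq hp hclose hmaxl
  exact ⟨hlet, by unfold Fop; rw [hlast]⟩

theorem Fop_eq_none_of {i : ℕ} {w : List ℕ}
    (hmax : ∀ q ≤ w.length, prefD i w q ≤ 0) :
    Fop i w = none := by
  have : (unmatchedCloses i w) = [] := by
    apply filter_range_nil
    intro q hq hclose
    have h1 := hclose.2 0 (by omega)
    rw [prefD_zero] at h1
    have := hmax (q+1) (by omega)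
    omega
  unfold Fop
  rw [this]
  rfl

theorem Fop_cases (i : ℕ) (w : List ℕ) :
    Fop i w = none ∨ ∃ p, p < w.length ∧ w[p]? = some i ∧
      (∀ q ≤ w.length, prefD i w q ≤ prefD i w (p+1)) ∧
      (∀ q ≤ p, prefD i w q < prefD i w (p+1)) ∧
      Fop i w = some (w.set p (i+1)) := by
  obtain ⟨p, hp, hmax, hfirst⟩ := exists_firstArgmax (prefD i w) w.length
  rcases p with _ | p'
  · refine Or.inl (Fop_eq_none_of fun q hq => ?_)
    have := hmax q hq
    rw [prefD_zero] at this
    omega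
  · have hp' : p' < w.length := by omega
    obtain ⟨h1, h2⟩ := Fop_eq_some_of hp' hmax (fun q hq => hfirst q (by omega))
    exact Or.inr ⟨p', hp', h1, hmax, (fun q hq => hfirst q (by omega)), h2⟩

theorem set_getElem?_self {w : List ℕ} {p a : ℕ} (h : w[p]? = some a) :
    w.set p a = w := by
  apply List.ext_getElem?
  intro k
  rw [List.getElem?_set]
  split_ifs with h1 h2
  · subst h1; exact h.symm
  · subst h1; exact absurd (List.getElem?_eq_some_iff.mp h).1 h2
  · rfl

/-- `F` undoes `E`. -/
theorem Fop_of_Eop {i : ℕ} {w u : List ℕ} (h : Eop i w = some u) :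
    Fop i u = some w := by
  rcases Eop_cases i w with hnone | ⟨p, hp, hlet, hmax, hlast, heq⟩
  · rw [hnone] at h; exact absurd h (by simp)
  rw [heq] at h
  obtain rfl : u = w.set p i := (Option.some.inj h).symm
  have hlen : (w.set p i).length = w.length := List.length_set
  have hprefD : ∀ k, prefD i (w.set p i) k = prefD i w k + (if p < k then 2 else 0) := by
    intro k
    rw [prefD_set hlet i i k]
    split_ifs <;> omega
  have hpstep : prefD i w (p+1) = prefD i w p - 1 := by
    rw [step_of_letter hlet]; simp
  have h1 : ∀ q ≤ (w.set p i).length,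
      prefD i (w.set p i) q ≤ prefD i (w.set p i) (p+1) := by
    intro q hq
    rw [hlen] at hq
    rw [hprefD, hprefD]
    by_cases hqp : q ≤ p
    · have := hmax q (by omega)
      have := hlast (p+1) (by omega) (by omega)
      split_ifs <;> omega
    · have := hlast q (by omega) (by omega)
      have := hlast (p+1) (by omega) (by omega)
      split_ifs <;> omega
  have h2 : ∀ q ≤ p, prefD i (w.set p i) q < prefD i (w.set p i) (p+1) := by
    intro q hq
    rw [hprefD, hprefD]
    have := hmax q (by omega)
    have := hlast (p+1) (by omega) (by omega)
    split_ifs <;> omega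
  obtain ⟨hlet', heq'⟩ := Fop_eq_some_of (by omega : p < (w.set p i).length) h1 h2
  rw [heq', List.set_set, set_getElem?_self hlet]

/-- `E` undoes `F`. -/
theorem Eop_of_Fop {i : ℕ} {w v : List ℕ} (h : Fop i w = some v) :
    Eop i v = some w := by
  rcases Fop_cases i w with hnone | ⟨p, hp, hlet, hmax, hfirst, heq⟩
  · rw [hnone] at h; exact absurd h (by simp)
  rw [heq] at h
  obtain rfl : v = w.set p (i+1) := (Option.some.inj h).symm
  have hlen : (w.set p (i+1)).length = w.length := List.length_set
  have hprefD : ∀ k, prefD i (w.set p (i+1)) k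
      = prefD i w k + (if p < k then -2 else 0) := by
    intro k
    rw [prefD_set hlet i (i+1) k]
    split_ifs <;> omega
  have h1 : ∀ q ≤ (w.set p (i+1)).length,
      prefD i (w.set p (i+1)) q ≤ prefD i (w.set p (i+1)) p := by
    intro q hq
    rw [hlen] at hq
    rw [hprefD, hprefD]
    have hpstep : prefD i w (p+1) = prefD i w p + 1 := by
      rw [step_of_letter hlet]; simp
    by_cases hqp : q ≤ p
    · have := hfirst q (by omega)
      split_ifs <;> omega
    · have := hmax q (by omega)
      split_ifs <;> omega
  have h2 : ∀ q ≤ (w.set p (i+1)).length, p < q →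
      prefD i (w.set p (i+1)) q < prefD i (w.set p (i+1)) p := by
    intro q hq hpq
    rw [hlen] at hq
    rw [hprefD, hprefD]
    have hpstep : prefD i w (p+1) = prefD i w p + 1 := by
      rw [step_of_letter hlet]; simp
    have := hmax q (by omega)
    split_ifs <;> omega
  obtain ⟨hlet', heq'⟩ := Eop_eq_some_of (by omega : p < (w.set p (i+1)).length) h1 h2
  rw [heq', List.set_set, set_getElem?_self hlet]

end OpSpec
section Confl

theorem Eop_some_elim {i : ℕ} {w u : List ℕ} (h : Eop i w = some u) :
    ∃ p, p < w.length ∧ w[p]? = some (i+1) ∧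
      (∀ q ≤ w.length, prefD i w q ≤ prefD i w p) ∧
      (∀ q ≤ w.length, p < q → prefD i w q < prefD i w p) ∧
      u = w.set p i := by
  rcases Eop_cases i w with hn | ⟨p, hp, h1, h2, h3, h4⟩
  · rw [hn] at h; exact absurd h (by simp)
  · rw [h4] at h
    exact ⟨p, hp, h1, h2, h3, (Option.some.inj h).symm⟩

theorem locConf_disjoint {i j : ℕ} {w u v : List ℕ} (hij : i + 1 < j)
    (hu : Eop i w = some u) (hv : Eop j w = some v) :
    ∃ z, Eop j u = some z ∧ Eop i v = some z := by
  obtain ⟨p, hp, hplet, hpmax, hplast, rfl⟩ := Eop_some_elim hu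
  obtain ⟨q, hq, hqlet, hqmax, hqlast, rfl⟩ := Eop_some_elim hv
  have hpq : p ≠ q := by
    intro h
    rw [h, hqlet] at hplet
    have := Option.some.inj hplet
    omega
  have pu : ∀ k, prefD j (w.set p i) k = prefD j w k := by
    intro k
    rw [prefD_set hplet j i k]
    split_ifs <;> omega
  have pv : ∀ k, prefD i (w.set q j) k = prefD i w k := by
    intro k
    rw [prefD_set hqlet i j k]
    split_ifs <;> omega
  obtain ⟨h1, h2⟩ := Eop_eq_some_of (i := j) (w := w.set p i) (p := q)
    (by simpa using hq)
    (by intro r hr; simp only [List.length_set] at hr; rw [pu, pu]; exact hqmax r hr)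
    (by intro r hr hqr; simp only [List.length_set] at hr; rw [pu, pu]
        exact hqlast r hr hqr)
  obtain ⟨h3, h4⟩ := Eop_eq_some_of (i := i) (w := w.set q j) (p := p)
    (by simpa using hp)
    (by intro r hr; simp only [List.length_set] at hr; rw [pv, pv]; exact hpmax r hr)
    (by intro r hr hpr; simp only [List.length_set] at hr; rw [pv, pv]
        exact hplast r hr hpr)
  refine ⟨(w.set p i).set q j, h2, ?_⟩
  rw [h4, List.set_comm _ _ hpq]

end Confl
section Adj

set_option maxHeartbeats 3200000 in
theorem locConf_adj {i : ℕ} {w u v : List ℕ}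
    (hu : Eop i w = some u) (hv : Eop (i+1) w = some v) :
    ∃ z, Relation.ReflTransGen (fun a b => Eop i a = some b ∨ Eop (i+1) a = some b) u z ∧
         Relation.ReflTransGen (fun a b => Eop i a = some b ∨ Eop (i+1) a = some b) v z := by
  obtain ⟨A, hA, hAlet, hA1, hA2, rfl⟩ := Eop_some_elim hu
  obtain ⟨B, hB, hBlet, hB1, hB2, rfl⟩ := Eop_some_elim hv
  have hABne : A ≠ B := by
    intro h; rw [h, hBlet] at hAlet; have := Option.some.inj hAlet; omega
  have hAstep : prefD i w (A+1) = prefD i w A - 1 := by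
    rw [step_of_letter hAlet]; split_ifs <;> omega
  have hBstep : prefD (i+1) w (B+1) = prefD (i+1) w B - 1 := by
    rw [step_of_letter hBlet]; split_ifs <;> omega
  have pu1 : ∀ k, prefD i (w.set A i) k = prefD i w k + (if A < k then 2 else 0) := by
    intro k; rw [prefD_set hAlet i i k]; split_ifs <;> omega
  have pu2 : ∀ k, prefD (i+1) (w.set A i) k
      = prefD (i+1) w k + (if A < k then -1 else 0) := by
    intro k; rw [prefD_set hAlet (i+1) i k]; split_ifs <;> omega
  have pv1 : ∀ k, prefD i (w.set B (i+1)) k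
      = prefD i w k + (if B < k then -1 else 0) := by
    intro k; rw [prefD_set hBlet i (i+1) k]; split_ifs <;> omega
  have pv2 : ∀ k, prefD (i+1) (w.set B (i+1)) k
      = prefD (i+1) w k + (if B < k then 2 else 0) := by
    intro k; rw [prefD_set hBlet (i+1) (i+1) k]; split_ifs <;> omega
  rcases lt_or_gt_of_ne hABne with hAB | hAB
  · -- Case A < B
    by_cases hcomm : ∀ k ≤ A, prefD (i+1) w k < prefD (i+1) w B
    · -- commuting square
      obtain ⟨hz1let, hz1⟩ := Eop_eq_some_of (i := i+1) (w := w.set A i) (p := B)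
        (by simpa using hB)
        (by intro q hq; simp only [List.length_set] at hq; rw [pu2, pu2]
            rcases le_or_gt q A with h | h
            · have := hcomm q h; split_ifs <;> omega
            · have := hB1 q hq; split_ifs <;> omega)
        (by intro q hq hBq; simp only [List.length_set] at hq; rw [pu2, pu2]
            have := hB2 q hq hBq; split_ifs <;> omega)
      obtain ⟨hz2let, hz2⟩ := Eop_eq_some_of (i := i) (w := w.set B (i+1)) (p := A)
        (by simpa using hA)
        (by intro q hq; simp only [List.length_set] at hq; rw [pv1, pv1]
            have := hA1 q hq; split_ifs <;> omega)
        (by intro q hq hAq; simp only [List.length_set] at hq; rw [pv1, pv1]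
            have := hA2 q hq hAq; split_ifs <;> omega)
      rw [List.set_comm _ _ (Ne.symm hABne)] at hz2
      exact ⟨(w.set A i).set B (i+1), Relation.ReflTransGen.single (Or.inr hz1),
        Relation.ReflTransGen.single (Or.inl hz2)⟩
    · -- hexagon
      push_neg at hcomm
      obtain ⟨k₀, hk₀A, hk₀⟩ := hcomm
      set A₂ := Nat.findGreatest (fun k => prefD (i+1) w B ≤ prefD (i+1) w k) A
        with hA₂def
      have hA₂A : A₂ ≤ A := Nat.findGreatest_le A
      have hA₂P : prefD (i+1) w B ≤ prefD (i+1) w A₂ := by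
        exact Nat.findGreatest_spec (P := fun k => prefD (i+1) w B ≤ prefD (i+1) w k) hk₀A hk₀
      have hA₂eq : prefD (i+1) w A₂ = prefD (i+1) w B :=
        le_antisymm (hB1 A₂ (by omega)) hA₂P
      have hA₂last : ∀ k, A₂ < k → k ≤ A → prefD (i+1) w k < prefD (i+1) w B := by
        intro k h1 h2
        have := Nat.findGreatest_is_greatest h1 h2
        omega
      obtain ⟨hL2let, hL2⟩ := Eop_eq_some_of (i := i+1) (w := w.set A i) (p := A₂)
        (by simp only [List.length_set]; omega)
        (by intro q hq; simp only [List.length_set] at hq; rw [pu2, pu2]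
            rcases le_or_gt q A₂ with h | h
            · have := hB1 q (by omega); split_ifs <;> omega
            · rcases le_or_gt q A with h' | h'
              · have := hA₂last q h h'; split_ifs <;> omega
              · have := hB1 q hq; split_ifs <;> omega)
        (by intro q hq hq2; simp only [List.length_set] at hq; rw [pu2, pu2]
            rcases le_or_gt q A with h' | h'
            · have := hA₂last q hq2 h'; split_ifs <;> omega
            · have := hB1 q hq; split_ifs <;> omega)
      have hA₂ne : A₂ ≠ A := by
        intro h
        have h2 := hL2let
        rw [h, List.getElem?_set, if_pos rfl, if_pos hA] at h2
        have := Option.some.inj h2; omega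
      have hA₂lt : A₂ < A := lt_of_le_of_ne hA₂A hA₂ne
      have pu2' : ∀ k, prefD (i+1) ((w.set A i).set A₂ (i+1)) k
          = prefD (i+1) w k + (if A < k then -1 else 0) + (if A₂ < k then 2 else 0) := by
        intro k; rw [prefD_set hL2let (i+1) (i+1) k, pu2]; split_ifs <;> omega
      have pu1' : ∀ k, prefD i ((w.set A i).set A₂ (i+1)) k
          = prefD i w k + (if A < k then 2 else 0) + (if A₂ < k then -1 else 0) := by
        intro k; rw [prefD_set hL2let i (i+1) k, pu1]; split_ifs <;> omega
      obtain ⟨hL3let, hL3⟩ := Eop_eq_some_of (i := i+1)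
        (w := (w.set A i).set A₂ (i+1)) (p := B)
        (by simp only [List.length_set]; omega)
        (by intro q hq; simp only [List.length_set] at hq; rw [pu2', pu2']
            rcases le_or_gt q A₂ with h | h
            · have := hB1 q (by omega); split_ifs <;> omega
            · rcases le_or_gt q A with h' | h'
              · have := hA₂last q h h'; split_ifs <;> omega
              · have := hB1 q hq; split_ifs <;> omega)
        (by intro q hq hBq; simp only [List.length_set] at hq; rw [pu2', pu2']
            have := hB2 q hq hBq; split_ifs <;> omega)
      have hwitC : prefD i w A - 1 ≤ prefD i w (A+1) := by omega
      set C := Nat.findGreatest (fun k => prefD i w A - 1 ≤ prefD i w k) B with hCdef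
      have hCB : C ≤ B := Nat.findGreatest_le B
      have hCgt : A + 1 ≤ C := Nat.le_findGreatest (by omega) hwitC
      have hCP : prefD i w A - 1 ≤ prefD i w C :=
        Nat.findGreatest_spec (P := fun k => prefD i w A - 1 ≤ prefD i w k)
          (by omega : A + 1 ≤ B) hwitC
      have hCeq : prefD i w C = prefD i w A - 1 := by
        have := hA2 C (by omega) (by omega)
        omega
      have hClast : ∀ k, C < k → k ≤ B → prefD i w k < prefD i w A - 1 := by
        intro k h1 h2
        have := Nat.findGreatest_is_greatest h1 h2
        omega
      have pu1'' : ∀ k, prefD i (((w.set A i).set A₂ (i+1)).set B (i+1)) k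
          = prefD i w k + (if A < k then 2 else 0) + (if A₂ < k then -1 else 0)
            + (if B < k then -1 else 0) := by
        intro k; rw [prefD_set hL3let i (i+1) k, pu1']; split_ifs <;> omega
      obtain ⟨hL4let, hL4⟩ := Eop_eq_some_of (i := i)
        (w := ((w.set A i).set A₂ (i+1)).set B (i+1)) (p := C)
        (by simp only [List.length_set]; omega)
        (by intro q hq; simp only [List.length_set] at hq; rw [pu1'', pu1'']
            rcases le_or_gt q A₂ with h | h
            · have := hA1 q (by omega); split_ifs <;> omega
            · rcases le_or_gt q A with h' | h'
              · have := hA1 q (by omega); split_ifs <;> omega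
              · rcases le_or_gt q B with h'' | h''
                · have := hA2 q (by omega) (by omega); split_ifs <;> omega
                · have := hA1 q hq; split_ifs <;> omega)
        (by intro q hq hCq; simp only [List.length_set] at hq; rw [pu1'', pu1'']
            rcases le_or_gt q B with h'' | h''
            · have := hClast q hCq h''; split_ifs <;> omega
            · have := hA2 q hq (by omega); split_ifs <;> omega)
      obtain ⟨hR2let, hR2⟩ := Eop_eq_some_of (i := i) (w := w.set B (i+1)) (p := A)
        (by simpa using hA)
        (by intro q hq; simp only [List.length_set] at hq; rw [pv1, pv1]
            have := hA1 q hq; split_ifs <;> omega)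
        (by intro q hq hAq; simp only [List.length_set] at hq; rw [pv1, pv1]
            have := hA2 q hq hAq; split_ifs <;> omega)
      have pv1' : ∀ k, prefD i ((w.set B (i+1)).set A i) k
          = prefD i w k + (if B < k then -1 else 0) + (if A < k then 2 else 0) := by
        intro k; rw [prefD_set hR2let i i k, pv1]; split_ifs <;> omega
      have pv2' : ∀ k, prefD (i+1) ((w.set B (i+1)).set A i) k
          = prefD (i+1) w k + (if B < k then 2 else 0) + (if A < k then -1 else 0) := by
        intro k; rw [prefD_set hR2let (i+1) i k, pv2]; split_ifs <;> omega
      obtain ⟨hR3let, hR3⟩ := Eop_eq_some_of (i := i)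
        (w := (w.set B (i+1)).set A i) (p := C)
        (by simp only [List.length_set]; omega)
        (by intro q hq; simp only [List.length_set] at hq; rw [pv1', pv1']
            rcases le_or_gt q A with h | h
            · have := hA1 q (by omega); split_ifs <;> omega
            · rcases le_or_gt q B with h' | h'
              · have := hA2 q (by omega) h; split_ifs <;> omega
              · have := hA1 q hq; split_ifs <;> omega)
        (by intro q hq hCq; simp only [List.length_set] at hq; rw [pv1', pv1']
            rcases le_or_gt q B with h' | h'
            · have := hClast q hCq h'; split_ifs <;> omega
            · have := hA2 q hq (by omega); split_ifs <;> omega)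
      have pv2'' : ∀ k, prefD (i+1) (((w.set B (i+1)).set A i).set C i) k
          = prefD (i+1) w k + (if B < k then 2 else 0) + (if A < k then -1 else 0)
            + (if C < k then -1 else 0) := by
        intro k; rw [prefD_set hR3let (i+1) i k, pv2']; split_ifs <;> omega
      obtain ⟨hR4let, hR4⟩ := Eop_eq_some_of (i := i+1)
        (w := ((w.set B (i+1)).set A i).set C i) (p := A₂)
        (by simp only [List.length_set]; omega)
        (by intro q hq; simp only [List.length_set] at hq; rw [pv2'', pv2'']
            rcases le_or_gt q A with h | h
            · have := hB1 q (by omega); split_ifs <;> omega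
            · rcases le_or_gt q C with h' | h'
              · have := hB1 q (by omega); split_ifs <;> omega
              · rcases le_or_gt q B with h'' | h''
                · have := hB1 q (by omega); split_ifs <;> omega
                · have := hB2 q hq h''; split_ifs <;> omega)
        (by intro q hq hq2; simp only [List.length_set] at hq; rw [pv2'', pv2'']
            rcases le_or_gt q A with h | h
            · have := hA₂last q hq2 h; split_ifs <;> omega
            · rcases le_or_gt q C with h' | h'
              · have := hB1 q (by omega); split_ifs <;> omega
              · rcases le_or_gt q B with h'' | h''
                · have := hB1 q (by omega); split_ifs <;> omega
                · have := hB2 q hq h''; split_ifs <;> omega)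
      refine ⟨(((w.set A i).set A₂ (i+1)).set B (i+1)).set C i,
        Relation.ReflTransGen.head (Or.inr hL2)
          (Relation.ReflTransGen.head (Or.inr hL3)
            (Relation.ReflTransGen.single (Or.inl hL4))), ?_⟩
      have hfin : (((w.set B (i+1)).set A i).set C i).set A₂ (i+1)
          = (((w.set A i).set A₂ (i+1)).set B (i+1)).set C i := by
        apply List.ext_getElem?
        intro k
        simp only [List.getElem?_set, List.length_set]
        split_ifs <;> first | rfl | (exfalso; omega)
      rw [hfin] at hR4
      exact Relation.ReflTransGen.head (Or.inl hR2)
        (Relation.ReflTransGen.head (Or.inl hR3)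
          (Relation.ReflTransGen.single (Or.inr hR4)))
  · -- Case B < A
    by_cases hcomm : ∀ k ≤ B, prefD i w k < prefD i w A
    · -- commuting square
      obtain ⟨hz1let, hz1⟩ := Eop_eq_some_of (i := i+1) (w := w.set A i) (p := B)
        (by simpa using hB)
        (by intro q hq; simp only [List.length_set] at hq; rw [pu2, pu2]
            have := hB1 q hq; split_ifs <;> omega)
        (by intro q hq hBq; simp only [List.length_set] at hq; rw [pu2, pu2]
            rcases le_or_gt q A with h | h
            · have := hB2 q hq hBq; split_ifs <;> omega
            · have := hB1 q hq; split_ifs <;> omega)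
      obtain ⟨hz2let, hz2⟩ := Eop_eq_some_of (i := i) (w := w.set B (i+1)) (p := A)
        (by simpa using hA)
        (by intro q hq; simp only [List.length_set] at hq; rw [pv1, pv1]
            rcases le_or_gt q B with h | h
            · have := hcomm q h; split_ifs <;> omega
            · have := hA1 q hq; split_ifs <;> omega)
        (by intro q hq hAq; simp only [List.length_set] at hq; rw [pv1, pv1]
            have := hA2 q hq hAq; split_ifs <;> omega)
      rw [List.set_comm _ _ (Ne.symm hABne)] at hz2
      exact ⟨(w.set A i).set B (i+1), Relation.ReflTransGen.single (Or.inr hz1),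
        Relation.ReflTransGen.single (Or.inl hz2)⟩
    · -- hexagon
      push_neg at hcomm
      obtain ⟨k₀, hk₀B, hk₀⟩ := hcomm
      set B₂ := Nat.findGreatest (fun k => prefD i w A ≤ prefD i w k) B with hB₂def
      have hB₂B : B₂ ≤ B := Nat.findGreatest_le B
      have hB₂P : prefD i w A ≤ prefD i w B₂ := by
        exact Nat.findGreatest_spec (P := fun k => prefD i w A ≤ prefD i w k) hk₀B hk₀
      have hB₂eq : prefD i w B₂ = prefD i w A :=
        le_antisymm (hA1 B₂ (by omega)) hB₂P
      have hB₂last : ∀ k, B₂ < k → k ≤ B → prefD i w k < prefD i w A := by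
        intro k h1 h2
        have := Nat.findGreatest_is_greatest h1 h2
        omega
      have hwitC : prefD (i+1) w B - 1 ≤ prefD (i+1) w (B+1) := by omega
      set C₂ := Nat.findGreatest (fun k => prefD (i+1) w B - 1 ≤ prefD (i+1) w k) A
        with hC₂def
      have hC₂A : C₂ ≤ A := Nat.findGreatest_le A
      have hC₂gt : B + 1 ≤ C₂ := Nat.le_findGreatest (by omega) hwitC
      have hC₂P : prefD (i+1) w B - 1 ≤ prefD (i+1) w C₂ :=
        Nat.findGreatest_spec (P := fun k => prefD (i+1) w B - 1 ≤ prefD (i+1) w k)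
          (by omega : B + 1 ≤ A) hwitC
      have hC₂eq : prefD (i+1) w C₂ = prefD (i+1) w B - 1 := by
        have := hB2 C₂ (by omega) (by omega)
        omega
      have hC₂last : ∀ k, C₂ < k → k ≤ A → prefD (i+1) w k < prefD (i+1) w B - 1 := by
        intro k h1 h2
        have := Nat.findGreatest_is_greatest h1 h2
        omega
      obtain ⟨hL2let, hL2⟩ := Eop_eq_some_of (i := i+1) (w := w.set A i) (p := B)
        (by simpa using hB)
        (by intro q hq; simp only [List.length_set] at hq; rw [pu2, pu2]
            have := hB1 q hq; split_ifs <;> omega)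
        (by intro q hq hBq; simp only [List.length_set] at hq; rw [pu2, pu2]
            rcases le_or_gt q A with h | h
            · have := hB2 q hq hBq; split_ifs <;> omega
            · have := hB1 q hq; split_ifs <;> omega)
      have pu2' : ∀ k, prefD (i+1) ((w.set A i).set B (i+1)) k
          = prefD (i+1) w k + (if A < k then -1 else 0) + (if B < k then 2 else 0) := by
        intro k; rw [prefD_set hL2let (i+1) (i+1) k, pu2]; split_ifs <;> omega
      have pu1' : ∀ k, prefD i ((w.set A i).set B (i+1)) k
          = prefD i w k + (if A < k then 2 else 0) + (if B < k then -1 else 0) := by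
        intro k; rw [prefD_set hL2let i (i+1) k, pu1]; split_ifs <;> omega
      obtain ⟨hL3let, hL3⟩ := Eop_eq_some_of (i := i+1)
        (w := (w.set A i).set B (i+1)) (p := C₂)
        (by simp only [List.length_set]; omega)
        (by intro q hq; simp only [List.length_set] at hq; rw [pu2', pu2']
            rcases le_or_gt q B with h | h
            · have := hB1 q (by omega); split_ifs <;> omega
            · rcases le_or_gt q C₂ with h' | h'
              · have := hB2 q (by omega) h; split_ifs <;> omega
              · rcases le_or_gt q A with h'' | h''
                · have := hC₂last q h' h''; split_ifs <;> omega
                · have := hB1 q hq; split_ifs <;> omega)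
        (by intro q hq hq2; simp only [List.length_set] at hq; rw [pu2', pu2']
            rcases le_or_gt q A with h'' | h''
            · have := hC₂last q hq2 h''; split_ifs <;> omega
            · have := hB2 q hq (by omega); split_ifs <;> omega)
      have pu1'' : ∀ k, prefD i (((w.set A i).set B (i+1)).set C₂ (i+1)) k
          = prefD i w k + (if A < k then 2 else 0) + (if B < k then -1 else 0)
            + (if C₂ < k then -1 else 0) := by
        intro k; rw [prefD_set hL3let i (i+1) k, pu1']; split_ifs <;> omega
      obtain ⟨hL4let, hL4⟩ := Eop_eq_some_of (i := i)
        (w := ((w.set A i).set B (i+1)).set C₂ (i+1)) (p := B₂)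
        (by simp only [List.length_set]; omega)
        (by intro q hq; simp only [List.length_set] at hq; rw [pu1'', pu1'']
            rcases le_or_gt q B₂ with h | h
            · have := hA1 q (by omega); split_ifs <;> omega
            · rcases le_or_gt q B with h' | h'
              · have := hB₂last q h h'; split_ifs <;> omega
              · rcases le_or_gt q C₂ with h'' | h''
                · have := hA1 q (by omega); split_ifs <;> omega
                · rcases le_or_gt q A with h3 | h3
                  · have := hA1 q (by omega); split_ifs <;> omega
                  · have := hA1 q hq; split_ifs <;> omega)
        (by intro q hq hq2; simp only [List.length_set] at hq; rw [pu1'', pu1'']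
            rcases le_or_gt q B with h' | h'
            · have := hB₂last q hq2 h'; split_ifs <;> omega
            · rcases le_or_gt q A with h3 | h3
              · have := hA1 q (by omega); split_ifs <;> omega
              · have := hA2 q hq h3; split_ifs <;> omega)
      obtain ⟨hR2let, hR2⟩ := Eop_eq_some_of (i := i) (w := w.set B (i+1)) (p := B₂)
        (by simp only [List.length_set]; omega)
        (by intro q hq; simp only [List.length_set] at hq; rw [pv1, pv1]
            rcases le_or_gt q B₂ with h | h
            · have := hA1 q (by omega); split_ifs <;> omega
            · rcases le_or_gt q B with h' | h'
              · have := hB₂last q h h'; split_ifs <;> omega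
              · have := hA1 q (by omega); split_ifs <;> omega)
        (by intro q hq hq2; simp only [List.length_set] at hq; rw [pv1, pv1]
            rcases le_or_gt q B with h' | h'
            · have := hB₂last q hq2 h'; split_ifs <;> omega
            · have := hA1 q (by omega); split_ifs <;> omega)
      have pv1' : ∀ k, prefD i ((w.set B (i+1)).set B₂ i) k
          = prefD i w k + (if B < k then -1 else 0) + (if B₂ < k then 2 else 0) := by
        intro k; rw [prefD_set hR2let i i k, pv1]; split_ifs <;> omega
      have pv2' : ∀ k, prefD (i+1) ((w.set B (i+1)).set B₂ i) k
          = prefD (i+1) w k + (if B < k then 2 else 0) + (if B₂ < k then -1 else 0) := by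
        intro k; rw [prefD_set hR2let (i+1) i k, pv2]; split_ifs <;> omega
      obtain ⟨hR3let, hR3⟩ := Eop_eq_some_of (i := i)
        (w := (w.set B (i+1)).set B₂ i) (p := A)
        (by simp only [List.length_set]; omega)
        (by intro q hq; simp only [List.length_set] at hq; rw [pv1', pv1']
            rcases le_or_gt q B₂ with h | h
            · have := hA1 q (by omega); split_ifs <;> omega
            · rcases le_or_gt q B with h' | h'
              · have := hB₂last q h h'; split_ifs <;> omega
              · have := hA1 q (by omega); split_ifs <;> omega)
        (by intro q hq hq2; simp only [List.length_set] at hq; rw [pv1', pv1']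
            have := hA2 q hq hq2; split_ifs <;> omega)
      have pv2'' : ∀ k, prefD (i+1) (((w.set B (i+1)).set B₂ i).set A i) k
          = prefD (i+1) w k + (if B < k then 2 else 0) + (if B₂ < k then -1 else 0)
            + (if A < k then -1 else 0) := by
        intro k; rw [prefD_set hR3let (i+1) i k, pv2']; split_ifs <;> omega
      obtain ⟨hR4let, hR4⟩ := Eop_eq_some_of (i := i+1)
        (w := ((w.set B (i+1)).set B₂ i).set A i) (p := C₂)
        (by simp only [List.length_set]; omega)
        (by intro q hq; simp only [List.length_set] at hq; rw [pv2'', pv2'']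
            rcases le_or_gt q B₂ with h | h
            · have := hB1 q (by omega); split_ifs <;> omega
            · rcases le_or_gt q B with h' | h'
              · have := hB1 q (by omega); split_ifs <;> omega
              · rcases le_or_gt q C₂ with h'' | h''
                · have := hB2 q (by omega) h'; split_ifs <;> omega
                · rcases le_or_gt q A with h3 | h3
                  · have := hC₂last q h'' h3; split_ifs <;> omega
                  · have := hB2 q hq (by omega); split_ifs <;> omega)
        (by intro q hq hq2; simp only [List.length_set] at hq; rw [pv2'', pv2'']
            rcases le_or_gt q A with h3 | h3
            · have := hC₂last q hq2 h3; split_ifs <;> omega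
            · have := hB2 q hq (by omega); split_ifs <;> omega)
      refine ⟨(((w.set A i).set B (i+1)).set C₂ (i+1)).set B₂ i,
        Relation.ReflTransGen.head (Or.inr hL2)
          (Relation.ReflTransGen.head (Or.inr hL3)
            (Relation.ReflTransGen.single (Or.inl hL4))), ?_⟩
      have hfin : (((w.set B (i+1)).set B₂ i).set A i).set C₂ (i+1)
          = (((w.set A i).set B (i+1)).set C₂ (i+1)).set B₂ i := by
        apply List.ext_getElem?
        intro k
        simp only [List.getElem?_set, List.length_set]
        split_ifs <;> first | rfl | (exfalso; omega)
      rw [hfin] at hR4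
      exact Relation.ReflTransGen.head (Or.inl hR2)
        (Relation.ReflTransGen.head (Or.inl hR3)
          (Relation.ReflTransGen.single (Or.inr hR4)))

end Adj
section Newman

/-- A single `E`-step with a color in `[1, m)`. -/
def EStep (m : ℕ) (a b : List ℕ) : Prop := ∃ i, 1 ≤ i ∧ i < m ∧ Eop i a = some b

theorem Eop_sum {i : ℕ} {w u : List ℕ} (h : Eop i w = some u) : u.sum + 1 = w.sum := by
  obtain ⟨p, hp, hlet, _, _, rfl⟩ := Eop_some_elim h
  have hw : w = w.take p ++ (i+1) :: w.drop (p+1) := by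
    conv_lhs => rw [← set_getElem?_self hlet]
    exact List.set_eq_take_cons_drop _ hp
  have hs : w.set p i = w.take p ++ i :: w.drop (p+1) := List.set_eq_take_cons_drop _ hp
  rw [hs]
  conv_rhs => rw [hw]
  simp [List.sum_append]
  omega

theorem EStep_sum {m : ℕ} {a b : List ℕ} (h : EStep m a b) : b.sum < a.sum := by
  obtain ⟨i, _, _, h3⟩ := h
  have := Eop_sum h3
  omega

theorem EStep_locConf {m : ℕ} {w u v : List ℕ} (hu : EStep m w u) (hv : EStep m w v) :
    ∃ z, Relation.ReflTransGen (EStep m) u z ∧ Relation.ReflTransGen (EStep m) v z := by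
  obtain ⟨i, hi1, hi2, hiE⟩ := hu
  obtain ⟨j, hj1, hj2, hjE⟩ := hv
  rcases Nat.lt_trichotomy i j with hij | rfl | hij
  · rcases Nat.lt_or_ge (i+1) j with h | h
    · obtain ⟨z, h1, h2⟩ := locConf_disjoint h hiE hjE
      exact ⟨z, Relation.ReflTransGen.single ⟨j, hj1, hj2, h1⟩,
        Relation.ReflTransGen.single ⟨i, hi1, hi2, h2⟩⟩
    · obtain rfl : j = i + 1 := by omega
      obtain ⟨z, h1, h2⟩ := locConf_adj hiE hjE
      refine ⟨z, Relation.ReflTransGen.mono ?_ _ _ h1, Relation.ReflTransGen.mono ?_ _ _ h2⟩ <;>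
        · rintro a b (h | h)
          exacts [⟨i, hi1, hi2, h⟩, ⟨i+1, hj1, hj2, h⟩]
  · have : u = v := Option.some.inj (hiE.symm.trans hjE)
    exact ⟨u, Relation.ReflTransGen.refl, this ▸ Relation.ReflTransGen.refl⟩
  · rcases Nat.lt_or_ge (j+1) i with h | h
    · obtain ⟨z, h1, h2⟩ := locConf_disjoint h hjE hiE
      exact ⟨z, Relation.ReflTransGen.single ⟨j, hj1, hj2, h2⟩,
        Relation.ReflTransGen.single ⟨i, hi1, hi2, h1⟩⟩
    · obtain rfl : i = j + 1 := by omega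
      obtain ⟨z, h1, h2⟩ := locConf_adj hjE hiE
      refine ⟨z, Relation.ReflTransGen.mono ?_ _ _ h2, Relation.ReflTransGen.mono ?_ _ _ h1⟩ <;>
        · rintro a b (h | h)
          exacts [⟨j, hj1, hj2, h⟩, ⟨j+1, hi1, hi2, h⟩]

/-- Newman's lemma for the terminating relation `EStep m`. -/
theorem EStep_confl (m : ℕ) : ∀ N w, w.sum = N → ∀ {u v : List ℕ},
    Relation.ReflTransGen (EStep m) w u → Relation.ReflTransGen (EStep m) w v →
    ∃ z, Relation.ReflTransGen (EStep m) u z ∧ Relation.ReflTransGen (EStep m) v z := by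
  intro N
  induction N using Nat.strong_induction_on with
  | _ N ih =>
    intro w hw u v hu hv
    rcases Relation.ReflTransGen.cases_head hu with rfl | ⟨u₁, hwu₁, hu₁⟩
    · exact ⟨v, hv, Relation.ReflTransGen.refl⟩
    rcases Relation.ReflTransGen.cases_head hv with rfl | ⟨v₁, hwv₁, hv₁⟩
    · exact ⟨u, Relation.ReflTransGen.refl, hu⟩
    obtain ⟨d, hd1, hd2⟩ := EStep_locConf hwu₁ hwv₁
    have hu₁sum : u₁.sum < w.sum := EStep_sum hwu₁
    have hv₁sum : v₁.sum < w.sum := EStep_sum hwv₁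
    obtain ⟨e, he1, he2⟩ := ih u₁.sum (by omega) u₁ rfl hu₁ hd1
    obtain ⟨f, hf1, hf2⟩ := ih v₁.sum (by omega) v₁ rfl hv₁ (hd2.trans he2)
    exact ⟨f, he1.trans hf2, hf1⟩

/-- Highest-weight words: all `E`-operators with colors in `[1, m)` vanish. -/
def ENormal (m : ℕ) (v : List ℕ) : Prop := ∀ i, 1 ≤ i → i < m → Eop i v = none

theorem ENormal_no_step {m : ℕ} {v u : List ℕ} (hn : ENormal m v) (h : EStep m v u) :
    False := by
  obtain ⟨i, h1, h2, h3⟩ := h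
  rw [hn i h1 h2] at h3
  exact absurd h3 (by simp)

theorem normal_reflTransGen_eq {m : ℕ} {v z : List ℕ} (hn : ENormal m v)
    (h : Relation.ReflTransGen (EStep m) v z) : v = z := by
  rcases Relation.ReflTransGen.cases_head h with rfl | ⟨c, hc, _⟩
  · rfl
  · exact absurd hc (fun hc => ENormal_no_step hn hc)

theorem exists_normal (m : ℕ) : ∀ N (w : List ℕ), w.sum = N →
    ∃ z, Relation.ReflTransGen (EStep m) w z ∧ ENormal m z := by
  intro N
  induction N using Nat.strong_induction_on with
  | _ N ih =>
    intro w hw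
    by_cases h : ENormal m w
    · exact ⟨w, Relation.ReflTransGen.refl, h⟩
    · simp only [ENormal] at h
      push_neg at h
      obtain ⟨i, h1, h2, h3⟩ := h
      obtain ⟨u, hu⟩ := Option.ne_none_iff_exists'.mp h3
      have hstep : EStep m w u := ⟨i, h1, h2, hu⟩
      obtain ⟨z, hz1, hz2⟩ := ih u.sum (by have := EStep_sum hstep; omega) u rfl
      exact ⟨z, Relation.ReflTransGen.head hstep hz1, hz2⟩

theorem normal_unique {m : ℕ} {w z₁ z₂ : List ℕ}
    (h1 : Relation.ReflTransGen (EStep m) w z₁)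
    (h2 : Relation.ReflTransGen (EStep m) w z₂)
    (hn1 : ENormal m z₁) (hn2 : ENormal m z₂) : z₁ = z₂ := by
  obtain ⟨d, hd1, hd2⟩ := EStep_confl m w.sum w rfl h1 h2
  exact (normal_reflTransGen_eq hn1 hd1).trans (normal_reflTransGen_eq hn2 hd2).symm

theorem EStep_wordEdge {m : ℕ} {a b : List ℕ} (h : EStep m a b) : wordEdge m a b := by
  obtain ⟨i, h1, h2, h3⟩ := h
  exact ⟨i, h1, h2, Or.inr (Fop_of_Eop h3)⟩

theorem wordEdge_cases {m : ℕ} {a b : List ℕ} (h : wordEdge m a b) :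
    EStep m a b ∨ EStep m b a := by
  obtain ⟨i, h1, h2, h3 | h3⟩ := h
  · exact Or.inr ⟨i, h1, h2, Eop_of_Fop h3⟩
  · exact Or.inl ⟨i, h1, h2, Eop_of_Fop h3⟩

theorem comp_reach {m : ℕ} {a b : List ℕ} (h : Relation.ReflTransGen (wordEdge m) a b) :
    ∀ z, Relation.ReflTransGen (EStep m) a z → ENormal m z →
      Relation.ReflTransGen (EStep m) b z := by
  induction h with
  | refl => exact fun z hz _ => hz
  | @tail b c hab hedge ih =>
    intro z hz hn
    have hbz := ih z hz hn
    rcases wordEdge_cases hedge with hstep | hstep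
    · obtain ⟨z', hcz', hz'n⟩ := exists_normal m c.sum c rfl
      have : z' = z :=
        normal_unique (Relation.ReflTransGen.head hstep hcz') hbz hz'n hn
      exact this ▸ hcz'
    · exact Relation.ReflTransGen.head hstep hbz
end Newman
/-- Fix `m, n ≥ 1` and consider the graph on `[m]^n` whose edges join `s`
and `F_i(s)` whenever `F_i(s) ≠ 0`, for `i ∈ [m-1]`. Each connected component of this graph
contains exactly one vertex `v` with `E_i(v) = 0` for every `i ∈ [m-1]`. -/
theorem exists_unique_highest (m n : ℕ) (hm : 1 ≤ m) (hn : 1 ≤ n)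
    (s : List ℕ) (hs : s.length = n) (hs' : IsWordOver m s) :
    ∃! v : List ℕ, wordComp m s v ∧ ∀ i, 1 ≤ i → i < m → Eop i v = none := by
  obtain ⟨v, hv1, hv2⟩ := exists_normal m s.sum s rfl
  refine ⟨v, ⟨Relation.ReflTransGen.mono (fun a b h => EStep_wordEdge h) _ _ hv1, hv2⟩, ?_⟩
  rintro v' ⟨hcomp', hnorm'⟩
  exact normal_reflTransGen_eq hnorm' (comp_reach hcomp' v hv1 hv2)
end

section
/- Fix a skew shape λ/μ, m ≥ 1, and a sequence h of positive integers. For each word r over [m], there is at most one reverse plane partition T of shape λ/μ with entries in [m] such that r(T) = r and h(T) = h. -/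
/-! ### Skew shapes and reverse plane partitions -/

/-- `(r, c)` is a cell of the skew shape `lam / mu` (matrix convention: `r` = row index
counted from the top, `c` = column index, both 0-based). -/
def IsSkewCell (lam mu : YoungDiagram) (r c : ℕ) : Prop :=
  (r, c) ∈ lam.cells ∧ (r, c) ∉ mu.cells

instance (lam mu : YoungDiagram) (r c : ℕ) : Decidable (IsSkewCell lam mu r c) := by
  unfold IsSkewCell; infer_instance

/-- `T` is a reverse plane partition of shape `lam / mu` with entries in `{1, …, m}`:
entries weakly increase along rows and columns; `T` is normalized to be `0` outside the
shape. -/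
def IsSkewRPP (lam mu : YoungDiagram) (m : ℕ) (T : ℕ → ℕ → ℕ) : Prop :=
  (∀ r c, ¬ IsSkewCell lam mu r c → T r c = 0) ∧
  (∀ r c, IsSkewCell lam mu r c → 1 ≤ T r c ∧ T r c ≤ m) ∧
  (∀ r c, IsSkewCell lam mu r c → IsSkewCell lam mu r (c + 1) → T r c ≤ T r (c + 1)) ∧
  (∀ r c, IsSkewCell lam mu r c → IsSkewCell lam mu (r + 1) c → T r c ≤ T (r + 1) c)

/-- The reading word of `T`: ignore each entry equal to the entry directly below it, and read
the remaining entries left-to-right, bottom-to-top. -/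
def readingWord (lam mu : YoungDiagram) (T : ℕ → ℕ → ℕ) : List ℕ :=
  ((List.range (lam.colLen 0)).reverse).flatMap fun r =>
    ((List.range (lam.rowLen r)).filter fun c =>
      decide (IsSkewCell lam mu r c) &&
        ! (decide (IsSkewCell lam mu (r + 1) c) && decide (T (r + 1) c = T r c))).map (T r)

/-- The height vector of `T`: the sequence of (1-based) row indices of the entries of `T`
contributing to the reading word, in reading order. -/
def heightWord (lam mu : YoungDiagram) (T : ℕ → ℕ → ℕ) : List ℕ :=
  ((List.range (lam.colLen 0)).reverse).flatMap fun r =>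
    ((List.range (lam.rowLen r)).filter fun c =>
      decide (IsSkewCell lam mu r c) &&
        ! (decide (IsSkewCell lam mu (r + 1) c) && decide (T (r + 1) c = T r c))).map
      fun _ => r + 1

def keepF (lam mu : YoungDiagram) (S : ℕ → ℕ → ℕ) (r c : ℕ) : Bool :=
  decide (IsSkewCell lam mu r c) &&
    ! (decide (IsSkewCell lam mu (r + 1) c) && decide (S (r + 1) c = S r c))

lemma keepF_true_iff (lam mu : YoungDiagram) (S : ℕ → ℕ → ℕ) (r c : ℕ) :
    keepF lam mu S r c = true ↔
      IsSkewCell lam mu r c ∧ ¬ (IsSkewCell lam mu (r + 1) c ∧ S (r + 1) c = S r c) := by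
  simp [keepF]
  tauto

lemma keepF_false_iff (lam mu : YoungDiagram) (S : ℕ → ℕ → ℕ) (r c : ℕ) :
    keepF lam mu S r c = false ↔
      ¬ IsSkewCell lam mu r c ∨ (IsSkewCell lam mu (r + 1) c ∧ S (r + 1) c = S r c) := by
  rw [← Bool.not_eq_true, keepF_true_iff]
  tauto


lemma count_flatMap' {α : Type*} (l : List α) (f : α → List ℕ) (x : ℕ) :
    ((l.flatMap f).count x) = (l.map fun a => (f a).count x).sum := by
  induction l with
  | nil => simp
  | cons a l ih => simp [List.count_append, ih]

lemma sum_map_eq_single {α : Type*} [DecidableEq α] (l : List α) (g : α → ℕ) (r : α)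
    (hnd : l.Nodup) (hr : r ∈ l) (hz : ∀ a ∈ l, a ≠ r → g a = 0) :
    (l.map g).sum = g r := by
  induction l with
  | nil => simp at hr
  | cons a l ih =>
    rcases List.mem_cons.1 hr with rfl | hr'
    · have hzz : ∀ b ∈ l, g b = 0 := fun b hb =>
        hz b (List.mem_cons_of_mem _ hb) (fun e => (List.nodup_cons.1 hnd).1 (e ▸ hb))
      have : (List.map g l).sum = 0 :=
        List.sum_eq_zero fun x hx => by
          obtain ⟨b, hb, rfl⟩ := List.mem_map.1 hx; exact hzz b hb
      simp [this]
    · have hz' : ∀ b ∈ l, b ≠ r → g b = 0 := fun b hb => hz b (List.mem_cons_of_mem _ hb)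
      have ha : g a = 0 := hz a (List.mem_cons_self)
        (by rintro rfl; exact (List.nodup_cons.1 hnd).1 hr')
      simp [ha, ih (List.nodup_cons.1 hnd).2 hr' hz']

lemma flatMap_pointwise {α : Type*} (l : List α) (f g : α → List ℕ)
    (hlen : ∀ a ∈ l, (f a).length = (g a).length)
    (heq : l.flatMap f = l.flatMap g) : ∀ a ∈ l, f a = g a := by
  induction l with
  | nil => simp
  | cons a l ih =>
    simp only [List.flatMap_cons] at heq
    have h1 := List.append_inj heq (hlen a (List.mem_cons_self))
    intro b hb
    rcases List.mem_cons.1 hb with rfl | hb'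
    · exact h1.1
    · exact ih (fun x hx => hlen x (List.mem_cons_of_mem _ hx)) h1.2 b hb'

lemma filter_map_unique (u u' : ℕ → ℕ) (p p' : ℕ → Bool) (cs : List ℕ)
    (hmono : cs.Pairwise fun a b =>
      (p a = true ∨ p' a = true) → (p b = true ∨ p' b = true) → u a ≤ u b ∧ u' a ≤ u' b)
    (hcond : ∀ c ∈ cs,
      (p c = false → p' c = false → u c = u' c) ∧
      (p c = true → p' c = false → u c < u' c) ∧
      (p c = false → p' c = true → u' c < u c))
    (heq : (cs.filter p).map u = (cs.filter p').map u') :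
    ∀ c ∈ cs, u c = u' c := by
  induction cs with
  | nil => simp
  | cons c cs ih =>
    obtain ⟨hc1, hc2, hc3⟩ := hcond c (List.mem_cons_self)
    have hmh := (List.pairwise_cons.1 hmono).1
    have hmono' := (List.pairwise_cons.1 hmono).2
    have hcond' : ∀ b ∈ cs, _ := fun b hb => hcond b (List.mem_cons_of_mem _ hb)
    cases hp : p c <;> cases hp' : p' c
    · -- both false
      simp only [List.filter_cons, hp, hp', Bool.false_eq_true, if_neg, ite_false] at heq
      intro c0 h0
      rcases List.mem_cons.1 h0 with rfl | h0'
      · exact hc1 hp hp'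
      · exact ih hmono' hcond' heq c0 h0'
    · -- p false, p' true
      exfalso
      simp only [List.filter_cons, hp, hp', ite_true, ite_false, Bool.false_eq_true,
        List.map_cons] at heq
      have hmem : u' c ∈ (cs.filter p).map u := by rw [heq]; exact List.mem_cons_self
      obtain ⟨c'', hc''mem, hc''⟩ := List.mem_map.1 hmem
      have hc''cs := List.mem_filter.1 hc''mem
      have := (hmh c'' hc''cs.1 (Or.inr hp') (Or.inl hc''cs.2)).1
      have := hc3 hp hp'
      omega
    · -- p true, p' false
      exfalso
      simp only [List.filter_cons, hp, hp', ite_true, ite_false, Bool.false_eq_true,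
        List.map_cons] at heq
      have hmem : u c ∈ (cs.filter p').map u' := by rw [← heq]; exact List.mem_cons_self
      obtain ⟨c'', hc''mem, hc''⟩ := List.mem_map.1 hmem
      have hc''cs := List.mem_filter.1 hc''mem
      have := (hmh c'' hc''cs.1 (Or.inl hp) (Or.inr hc''cs.2)).2
      have := hc2 hp hp'
      omega
    · -- both true
      simp only [List.filter_cons, hp, hp', ite_true, List.map_cons, List.cons.injEq] at heq
      intro c0 h0
      rcases List.mem_cons.1 h0 with rfl | h0'
      · exact heq.1
      · exact ih hmono' hcond' heq.2 c0 h0'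

lemma skewCell_of_between (lam mu : YoungDiagram) {r a b c : ℕ} (hab : a ≤ c) (hcb : c ≤ b)
    (ha : IsSkewCell lam mu r a) (hb : IsSkewCell lam mu r b) : IsSkewCell lam mu r c := by
  constructor
  · rw [YoungDiagram.mem_cells]
    exact lam.up_left_mem le_rfl hcb ((YoungDiagram.mem_cells _).1 hb.1)
  · intro hmem
    exact ha.2 ((YoungDiagram.mem_cells _).2
      (mu.up_left_mem le_rfl hab ((YoungDiagram.mem_cells _).1 hmem)))

lemma row_mono (lam mu : YoungDiagram) (T : ℕ → ℕ → ℕ) (m : ℕ) (hT : IsSkewRPP lam mu m T)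
    (r : ℕ) : ∀ {a b : ℕ}, a ≤ b → IsSkewCell lam mu r a → IsSkewCell lam mu r b →
    T r a ≤ T r b := by
  intro a b
  induction b with
  | zero =>
    intro hab _ _
    have : a = 0 := by omega
    subst this; exact le_rfl
  | succ b ih =>
    intro hab ha hb
    rcases Nat.lt_or_ge a (b + 1) with hlt | hge
    · have hab' : a ≤ b := by omega
      have hbc : IsSkewCell lam mu r b :=
        skewCell_of_between lam mu hab' (Nat.le_succ b) ha hb
      exact le_trans (ih hab' ha hbc) (hT.2.2.1 r b hbc hb)
    · have : a = b + 1 := by omega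
      subst this; exact le_rfl

/-- Fix a skew shape `lam/mu`, `m ≥ 1` and a sequence `h` of positive
integers. For each word `w` over `[m]` there is at most one reverse plane partition `T` of
shape `lam/mu` with entries in `[m]` such that `r(T) = w` and `h(T) = h`. -/
theorem rpp_unique_of_readingWord_heightWord (lam mu : YoungDiagram) (hsub : mu ≤ lam)
    (m : ℕ) (hm : 1 ≤ m) (h : List ℕ) (hh : ∀ x ∈ h, 1 ≤ x)
    (w : List ℕ) (hw : ∀ x ∈ w, 1 ≤ x ∧ x ≤ m)
    (T T' : ℕ → ℕ → ℕ) (hT : IsSkewRPP lam mu m T) (hT' : IsSkewRPP lam mu m T')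
    (hrT : readingWord lam mu T = w) (hrT' : readingWord lam mu T' = w)
    (hhT : heightWord lam mu T = h) (hhT' : heightWord lam mu T' = h) :
    T = T' := by
  classical
  set n := lam.colLen 0 with hn
  have hread : ∀ S : ℕ → ℕ → ℕ, readingWord lam mu S =
      ((List.range n).reverse).flatMap fun r =>
        ((List.range (lam.rowLen r)).filter (keepF lam mu S r)).map (S r) := fun _ => rfl
  have hht : ∀ S : ℕ → ℕ → ℕ, heightWord lam mu S =
      ((List.range n).reverse).flatMap fun r =>
        ((List.range (lam.rowLen r)).filter (keepF lam mu S r)).map (fun _ => r + 1) :=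
    fun _ => rfl
  -- per-row lengths from counts on the height word
  have hcount : ∀ S : ℕ → ℕ → ℕ, ∀ r, r < n →
      (heightWord lam mu S).count (r + 1) =
      ((List.range (lam.rowLen r)).filter (keepF lam mu S r)).length := by
    intro S r hr
    rw [hht S, count_flatMap']
    rw [sum_map_eq_single _ _ r ((List.nodup_reverse).2 List.nodup_range)
      (by simp [hr])
      (by
        intro a _ hne
        rw [List.map_const', List.count_replicate]
        rw [if_neg]
        simp only [beq_iff_eq]
        omega)]
    rw [List.map_const', List.count_replicate, if_pos (by simp)]
  have hhTT' : heightWord lam mu T = heightWord lam mu T' := hhT.trans hhT'.symm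
  have hlen : ∀ r, r < n →
      ((List.range (lam.rowLen r)).filter (keepF lam mu T r)).length =
      ((List.range (lam.rowLen r)).filter (keepF lam mu T' r)).length := by
    intro r hr
    rw [← hcount T r hr, ← hcount T' r hr, hhTT']
  have hsegs : ∀ r ∈ (List.range n).reverse,
      ((List.range (lam.rowLen r)).filter (keepF lam mu T r)).map (T r) =
      ((List.range (lam.rowLen r)).filter (keepF lam mu T' r)).map (T' r) := by
    refine flatMap_pointwise _ _ _ ?_ ?_
    · intro r hr
      rw [List.length_map, List.length_map]
      exact hlen r (by simpa using hr)
    · rw [← hread T, ← hread T', hrT, hrT']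
  have cellrow : ∀ r c, IsSkewCell lam mu r c → r < n := by
    intro r c hc
    have : (r, 0) ∈ lam := lam.up_left_mem le_rfl (Nat.zero_le c)
      ((YoungDiagram.mem_cells _).1 hc.1)
    exact YoungDiagram.mem_iff_lt_colLen.1 this
  have keep_cell : ∀ (S : ℕ → ℕ → ℕ) r c, keepF lam mu S r c = true →
      IsSkewCell lam mu r c := fun S r c hc => ((keepF_true_iff lam mu S r c).1 hc).1
  have main : ∀ k r, n ≤ r + k → ∀ c, T r c = T' r c := by
    intro k
    induction k with
    | zero =>
      intro r hr c
      have h1 : ¬ IsSkewCell lam mu r c := fun hc => by have := cellrow r c hc; omega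
      rw [hT.1 r c h1, hT'.1 r c h1]
    | succ k ih =>
      intro r hr c
      by_cases hcase : n ≤ r + k
      · exact ih r hcase c
      · have hrn : r < n := by omega
        have hrow1 : ∀ c, T (r + 1) c = T' (r + 1) c := fun c => ih (r + 1) (by omega) c
        by_cases hclt : c < lam.rowLen r
        · -- in-range columns: apply filter_map_unique
          have hmono : (List.range (lam.rowLen r)).Pairwise fun a b =>
              (keepF lam mu T r a = true ∨ keepF lam mu T' r a = true) →
              (keepF lam mu T r b = true ∨ keepF lam mu T' r b = true) →
              T r a ≤ T r b ∧ T' r a ≤ T' r b := by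
            refine List.pairwise_lt_range.imp ?_
            intro a b hab hka hkb
            have ha : IsSkewCell lam mu r a := hka.elim (keep_cell T r a) (keep_cell T' r a)
            have hb : IsSkewCell lam mu r b := hkb.elim (keep_cell T r b) (keep_cell T' r b)
            exact ⟨row_mono lam mu T m hT r (le_of_lt hab) ha hb,
              row_mono lam mu T' m hT' r (le_of_lt hab) ha hb⟩
          have hcond : ∀ c ∈ List.range (lam.rowLen r),
              (keepF lam mu T r c = false → keepF lam mu T' r c = false → T r c = T' r c) ∧
              (keepF lam mu T r c = true → keepF lam mu T' r c = false → T r c < T' r c) ∧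
              (keepF lam mu T r c = false → keepF lam mu T' r c = true → T' r c < T r c) := by
            intro c _
            refine ⟨?_, ?_, ?_⟩
            · intro hp hp'
              by_cases hcell : IsSkewCell lam mu r c
              · obtain hq | ⟨hbel, heq⟩ := (keepF_false_iff lam mu T r c).1 hp
                · exact absurd hcell hq
                obtain hq' | ⟨_, heq'⟩ := (keepF_false_iff lam mu T' r c).1 hp'
                · exact absurd hcell hq'
                rw [← heq, ← heq', hrow1 c]
              · rw [hT.1 r c hcell, hT'.1 r c hcell]
            · intro hp hp'
              obtain ⟨hcell, hne⟩ := (keepF_true_iff lam mu T r c).1 hp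
              obtain hq' | ⟨hbel, heq'⟩ := (keepF_false_iff lam mu T' r c).1 hp'
              · exact absurd hcell hq'
              have h1 : T r c ≤ T (r + 1) c := hT.2.2.2 r c hcell hbel
              have h2 : T (r + 1) c ≠ T r c := fun e => hne ⟨hbel, e⟩
              have h3 : T r c < T (r + 1) c := lt_of_le_of_ne h1 (Ne.symm h2)
              rw [← heq', ← hrow1 c]
              exact h3
            · intro hp hp'
              obtain ⟨hcell, hne⟩ := (keepF_true_iff lam mu T' r c).1 hp'
              obtain hq | ⟨hbel, heq⟩ := (keepF_false_iff lam mu T r c).1 hp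
              · exact absurd hcell hq
              have h1 : T' r c ≤ T' (r + 1) c := hT'.2.2.2 r c hcell hbel
              have h2 : T' (r + 1) c ≠ T' r c := fun e => hne ⟨hbel, e⟩
              have h3 : T' r c < T' (r + 1) c := lt_of_le_of_ne h1 (Ne.symm h2)
              rw [← heq, hrow1 c]
              exact h3
          exact filter_map_unique (T r) (T' r) _ _ _ hmono hcond
            (hsegs r (by simp [hrn])) c (List.mem_range.2 hclt)
        · have hcell : ¬ IsSkewCell lam mu r c := by
            intro hc
            exact hclt (YoungDiagram.mem_iff_lt_rowLen.1 ((YoungDiagram.mem_cells _).1 hc.1))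
          rw [hT.1 r c hcell, hT'.1 r c hcell]
  funext r c
  exact main n r (by omega) c
end

section
/- Fix m ≥ 1, a partition λ with at most m rows, and i ∈ [m−1]. If T is a semistandard Young tableau of shape λ with entries in [m] and w is its row reading word (rows read left-to-right, from the bottom row to the top row), then whenever E_i(w) ≠ 0 (respectively F_i(w) ≠ 0), E_i(w) (respectively F_i(w)) is the row reading word of a semistandard Young tableau of the same shape λ with entries in [m]. -/
/-! ### Partitions, semistandard Young tableaux and Schur polynomials -/

/-- `ν : ℕ → ℕ` encodes a partition `(ν 1, ν 2, …)` (the value `ν 0` is normalized to `0`):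
the parts weakly decrease and only finitely many are nonzero. -/
def IsPartitionFn (ν : ℕ → ℕ) : Prop :=
  ν 0 = 0 ∧ (∀ j, ν (j + 2) ≤ ν (j + 1)) ∧ ∃ N, ∀ j, N ≤ j → ν j = 0

/-- `S` is a semistandard Young tableau of shape `ν` with entries in `{1, …, m}`: the cells of
the shape are the `(r, c)` (0-based) with `c < ν (r+1)`; entries weakly increase along rows
and strictly increase down columns; `S` is normalized to be `0` outside the shape. -/
def IsSSYTFn (ν : ℕ → ℕ) (m : ℕ) (S : ℕ → ℕ → ℕ) : Prop :=
  (∀ r c, ¬ c < ν (r + 1) → S r c = 0) ∧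
  (∀ r c, c < ν (r + 1) → 1 ≤ S r c ∧ S r c ≤ m) ∧
  (∀ r c, c + 1 < ν (r + 1) → S r c ≤ S r (c + 1)) ∧
  (∀ r c, c < ν (r + 2) → S r c < S (r + 1) c)

/-- The monomial `x^S = ∏_j x_j^(number of entries of S equal to j)` of a semistandard Young
tableau `S` of shape `ν`. -/
noncomputable def ssytMonom (ν : ℕ → ℕ) (S : ℕ → ℕ → ℕ) : MvPolynomial ℕ ℤ :=
  ∏ᶠ j : ℕ, (MvPolynomial.X j : MvPolynomial ℕ ℤ) ^
    Nat.card {p : ℕ × ℕ // p.2 < ν (p.1 + 1) ∧ S p.1 p.2 = j}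

/-- The Schur polynomial `s_ν(x_1, …, x_m)`: the sum of `x^S` over all semistandard Young
tableaux `S` of shape `ν` with entries in `{1, …, m}`. -/
noncomputable def schurPoly (ν : ℕ → ℕ) (m : ℕ) : MvPolynomial ℕ ℤ :=
  ∑ᶠ S : {S : ℕ → ℕ → ℕ // IsSSYTFn ν m S}, ssytMonom ν S.1

/-- The row reading word of a tableau `S` of shape `ν` (a partition with at most `m` rows):
rows are read left-to-right, from the bottom row to the top row. -/
def rowWord (m : ℕ) (ν : ℕ → ℕ) (S : ℕ → ℕ → ℕ) : List ℕ :=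
  ((List.range m).reverse).flatMap fun r => (List.range (ν (r + 1))).map (S r)

section Aux

lemma aux_head_min {l : List ℕ} (hl : l.Pairwise (· < ·)) {p x : ℕ}
    (hp : l.head? = some p) (hx : x ∈ l) : p ≤ x := by
  cases l with
  | nil => simp at hx
  | cons a t =>
    simp only [List.head?_cons, Option.some.injEq] at hp
    subst hp
    rcases List.mem_cons.mp hx with h | h
    · omega
    · exact le_of_lt ((List.pairwise_cons.mp hl).1 x h)

lemma aux_mem_getLast? : ∀ {l : List ℕ} {p : ℕ}, l.getLast? = some p → p ∈ l := by
  intro l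
  induction l with
  | nil => simp
  | cons a t ih =>
    intro p hp
    cases t with
    | nil => simp_all
    | cons b t' =>
      rw [List.getLast?_cons_cons] at hp
      exact List.mem_cons_of_mem a (ih hp)

lemma aux_getLast_max : ∀ {l : List ℕ}, l.Pairwise (· < ·) → ∀ {p x : ℕ},
    l.getLast? = some p → x ∈ l → x ≤ p := by
  intro l
  induction l with
  | nil => intro _ p x _ hx; simp at hx
  | cons a t ih =>
    intro hl p x hp hx
    cases t with
    | nil => simp_all
    | cons b t' =>
      rw [List.getLast?_cons_cons] at hp
      rcases List.mem_cons.mp hx with h | h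
      · subst h
        have hpmem : p ∈ b :: t' := aux_mem_getLast? hp
        have := (List.pairwise_cons.mp hl).1 p hpmem
        omega
      · exact ih (List.pairwise_cons.mp hl).2 hp h

lemma aux_split_unique : ∀ (A : List ℕ) {B : List ℕ} (C : List ℕ) {D : List ℕ} {r : ℕ},
    A ++ r :: B = C ++ r :: D → r ∉ A → r ∉ C → A = C ∧ B = D := by
  intro A
  induction A with
  | nil =>
    intro B C D r h hA hC
    cases C with
    | nil => simp_all
    | cons x C' =>
      simp only [List.nil_append, List.cons_append, List.cons.injEq] at h
      exact absurd (h.1 ▸ List.mem_cons_self (a := x) (l := C')) hC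
  | cons y A' ih =>
    intro B C D r h hA hC
    cases C with
    | nil =>
      simp only [List.cons_append, List.nil_append, List.cons.injEq] at h
      obtain ⟨rfl, -⟩ := h
      exact absurd List.mem_cons_self hA
    | cons x C' =>
      simp only [List.cons_append, List.cons.injEq] at h
      obtain ⟨rfl, h2⟩ := h
      have := ih C' h2 (fun hm => hA (List.mem_cons_of_mem _ hm))
        (fun hm => hC (List.mem_cons_of_mem _ hm))
      exact ⟨by rw [this.1], this.2⟩

lemma aux_flatMap_decomp (f : ℕ → List ℕ) :
    ∀ (l : List ℕ) (p : ℕ), p < (l.flatMap f).length →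
    ∃ l1 a l2 c, l = l1 ++ a :: l2 ∧ c < (f a).length ∧ p = (l1.flatMap f).length + c := by
  intro l
  induction l with
  | nil => intro p hp; simp at hp
  | cons a t ih =>
    intro p hp
    rw [List.flatMap_cons, List.length_append] at hp
    by_cases h : p < (f a).length
    · exact ⟨[], a, t, p, rfl, h, by simp⟩
    · obtain ⟨l1, b, l2, c, h1, h2, h3⟩ := ih (p - (f a).length) (by omega)
      refine ⟨a :: l1, b, l2, c, by rw [h1]; simp, h2, ?_⟩
      rw [List.flatMap_cons, List.length_append]
      omega

lemma aux_range'_split (s k1 k2 : ℕ) :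
    List.range' s (k1 + k2) = List.range' s k1 ++ List.range' (s + k1) k2 := by
  have := List.range'_append (s := s) (m := k1) (n := k2) (step := 1)
  simp only [Nat.one_mul] at this
  exact this.symm

lemma aux_range_split (j n : ℕ) (h : j ≤ n) :
    List.range n = List.range j ++ List.range' j (n - j) := by
  rw [List.range_eq_range', List.range_eq_range', show n = j + (n - j) by omega,
    aux_range'_split]
  simp [Nat.add_sub_cancel_left]

lemma aux_map_range_take (f : ℕ → ℕ) (j n : ℕ) (h : j ≤ n) :
    ((List.range n).map f).take j = (List.range j).map f := by
  rw [aux_range_split j n h, List.map_append, List.take_left' (by simp)]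

lemma aux_map_range_drop (f : ℕ → ℕ) (j n : ℕ) (h : j ≤ n) :
    ((List.range n).map f).drop j = (List.range' j (n - j)).map f := by
  rw [aux_range_split j n h, List.map_append, List.drop_left' (by simp)]

lemma aux_count_eq_len (f : ℕ → ℕ) (a s k : ℕ) (h : ∀ c, s ≤ c → c < s + k → f c = a) :
    ((List.range' s k).map f).count a = k := by
  have heq : List.count a ((List.range' s k).map f) = ((List.range' s k).map f).length := by
    rw [List.count_eq_length]
    intro b hb
    simp only [List.mem_map, List.mem_range'] at hb
    obtain ⟨c, ⟨j, hj, rfl⟩, rfl⟩ := hb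
    exact (h _ (by omega) (by omega)).symm
  rw [heq]
  simp

lemma aux_count_eq_zero (f : ℕ → ℕ) (a s k : ℕ) (h : ∀ c, s ≤ c → c < s + k → f c ≠ a) :
    ((List.range' s k).map f).count a = 0 := by
  rw [List.count_eq_zero]
  intro hmem
  simp only [List.mem_map, List.mem_range'] at hmem
  obtain ⟨c, ⟨j, hj, rfl⟩, hfc⟩ := hmem
  exact h _ (by omega) (by omega) hfc

lemma aux_getElem_of_getElem? {l : List ℕ} {n a : ℕ} (h : l[n]? = some a)
    (hn : n < l.length) : l[n] = a := by
  rw [List.getElem?_eq_getElem hn] at h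
  exact Option.some.inj h

lemma aux_getElem_mid {A C : List ℕ} {f : ℕ → ℕ} {n j : ℕ} (hj : j < n) :
    (A ++ ((List.range n).map f ++ C))[A.length + j]? = some (f j) := by
  rw [List.getElem?_append_right (Nat.le_add_right _ _)]
  simp only [Nat.add_sub_cancel_left]
  rw [List.getElem?_append]
  simp [hj, List.getElem?_map, List.getElem?_range, hj]

lemma suffD_succ_open {i : ℕ} {w : List ℕ} {k : ℕ} (hk : k < w.length) (h : w[k] = i + 1) :
    suffD i w k = suffD i w (k+1) + 1 := by
  unfold suffD
  rw [List.drop_eq_getElem_cons hk, h]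
  simp only [List.count_cons]
  push_cast
  simp
  omega

lemma prefD_succ_close {i : ℕ} {w : List ℕ} {k : ℕ} (hk : k < w.length) (h : w[k] = i) :
    prefD i w (k+1) = prefD i w k + 1 := by
  unfold prefD
  rw [List.take_succ, List.getElem?_eq_getElem hk, h]
  simp only [Option.toList_some, List.count_append, List.count_singleton]
  push_cast
  simp
  omega

lemma suffD_split' {i : ℕ} {w P seg Q : List ℕ} {k : ℕ} (hw : w = P ++ (seg ++ Q))
    (hk : k = P.length) :
    suffD i w k = ((seg.count (i+1) : ℤ) - seg.count i) + suffD i w (k + seg.length) := by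
  have h1 : w.drop k = seg ++ Q := by rw [hw, hk]; exact List.drop_left
  have h2 : w.drop (k + seg.length) = Q := by
    rw [hw, hk, ← List.append_assoc, show P.length + seg.length = (P ++ seg).length by simp]
    exact List.drop_left
  unfold suffD
  rw [h1, h2, List.count_append, List.count_append]
  push_cast
  ring

lemma prefD_split' {i : ℕ} {w P seg Q : List ℕ} {k : ℕ} (hw : w = P ++ (seg ++ Q))
    (hk : k = P.length) :
    prefD i w (k + seg.length) = prefD i w k + ((seg.count i : ℤ) - seg.count (i+1)) := by
  have h1 : w.take k = P := by rw [hw, hk]; exact List.take_left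
  have h2 : w.take (k + seg.length) = P ++ seg := by
    rw [hw, hk, ← List.append_assoc, show P.length + seg.length = (P ++ seg).length by simp]
    exact List.take_left
  unfold prefD
  rw [h1, h2, List.count_append, List.count_append]
  push_cast
  ring

end Aux

/-- The word of row `r` of a tableau. -/
def rwF (ν : ℕ → ℕ) (S : ℕ → ℕ → ℕ) (r : ℕ) : List ℕ := (List.range (ν (r+1))).map (S r)

lemma rwF_length (ν : ℕ → ℕ) (S : ℕ → ℕ → ℕ) (r : ℕ) : (rwF ν S r).length = ν (r+1) := by
  simp [rwF]

lemma rowWord_eq_flatMap (m : ℕ) (ν : ℕ → ℕ) (S : ℕ → ℕ → ℕ) :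
    rowWord m ν S = ((List.range m).reverse).flatMap (rwF ν S) := rfl

lemma range_reverse_split {m r : ℕ} (hr : r < m) :
    (List.range m).reverse =
      (List.range' (r+1) (m-r-1)).reverse ++ r :: (List.range r).reverse := by
  have h1 : List.range m = List.range r ++ (r :: List.range' (r+1) (m-r-1)) := by
    rw [aux_range_split r m (le_of_lt hr)]
    congr 1
    obtain ⟨k, hk⟩ : ∃ k, m - r = k + 1 := ⟨m - r - 1, by omega⟩
    rw [show m - r - 1 = k by omega, hk, List.range'_succ]
  rw [h1]
  simp [List.reverse_append]

lemma rowWord_decomp (m : ℕ) (ν : ℕ → ℕ) (S : ℕ → ℕ → ℕ) {p : ℕ}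
    (hp : p < (rowWord m ν S).length) :
    ∃ r c, r < m ∧ c < ν (r+1) ∧
      p = (((List.range' (r+1) (m-r-1)).reverse).flatMap (rwF ν S)).length + c := by
  rw [rowWord_eq_flatMap] at hp
  obtain ⟨l1, r, l2, c, h1, h2, h3⟩ := aux_flatMap_decomp (rwF ν S) _ p hp
  have hrm : r < m := by
    have : r ∈ (List.range m).reverse := by rw [h1]; simp
    simpa using this
  have hrev : List.range m = l2.reverse ++ r :: l1.reverse := by
    rw [← List.reverse_reverse (List.range m), h1]
    simp
  have hrev2 : List.range m = List.range r ++ r :: List.range' (r+1) (m-r-1) := by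
    rw [aux_range_split r m (le_of_lt hrm)]
    congr 1
    obtain ⟨k, hk⟩ : ∃ k, m - r = k + 1 := ⟨m - r - 1, by omega⟩
    rw [show m - r - 1 = k by omega, hk, List.range'_succ]
  have hnd := List.nodup_range (n := m)
  rw [hrev] at hnd
  have hrl2 : r ∉ l2.reverse := by
    rcases List.nodup_append.mp hnd with ⟨-, -, hdisj⟩
    intro hmem
    exact hdisj _ hmem _ List.mem_cons_self rfl
  have hrl0 : r ∉ List.range r := by simp
  have hEq : l2.reverse ++ r :: l1.reverse =
      List.range r ++ r :: List.range' (r+1) (m-r-1) := by rw [← hrev, hrev2]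
  have hid := aux_split_unique l2.reverse (List.range r) hEq hrl2 hrl0
  have hl1 : l1 = (List.range' (r+1) (m-r-1)).reverse := by
    rw [← List.reverse_reverse l1, hid.2]
  refine ⟨r, c, hrm, by simpa [rwF] using h2, ?_⟩
  rw [← hl1]
  exact h3

lemma rowWord_split (m : ℕ) (ν : ℕ → ℕ) (S : ℕ → ℕ → ℕ) {r : ℕ} (hr : r < m) :
    rowWord m ν S =
      ((List.range' (r+1) (m-r-1)).reverse).flatMap (rwF ν S) ++
        (rwF ν S r ++ ((List.range r).reverse).flatMap (rwF ν S)) := by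
  rw [rowWord_eq_flatMap, range_reverse_split hr, List.flatMap_append, List.flatMap_cons]

lemma rowWord_update (m : ℕ) (ν : ℕ → ℕ) (S : ℕ → ℕ → ℕ) (r c x : ℕ)
    (hr : r < m) (hc : c < ν (r+1)) :
    rowWord m ν (fun r' c' => if r' = r ∧ c' = c then x else S r' c') =
      (rowWord m ν S).set
        ((((List.range' (r+1) (m-r-1)).reverse).flatMap (rwF ν S)).length + c) x := by
  set S' : ℕ → ℕ → ℕ := fun r' c' => if r' = r ∧ c' = c then x else S r' c' with hS'
  have hfm : ∀ a : ℕ, a ≠ r → rwF ν S' a = rwF ν S a := by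
    intro a ha
    unfold rwF
    apply List.map_congr_left
    intro c' _
    simp [hS', ha]
  have hmid : rwF ν S' r = (rwF ν S r).set c x := by
    apply List.ext_getElem
    · simp [rwF]
    · intro n h1 h2
      simp only [rwF, List.getElem_map, List.getElem_range, List.getElem_set]
      by_cases hn : n = c
      · simp [hS', hn]
      · have h3 : ¬(r = r ∧ n = c) := by simp [hn]
        have h4 : ¬(c = n) := fun h => hn h.symm
        simp [hS', h3, h4]
        exact fun h => absurd h hn
  have hU : ∀ l : List ℕ, r ∉ l → l.flatMap (rwF ν S') = l.flatMap (rwF ν S) := by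
    intro l hl
    apply List.flatMap_congr
    intro a ha
    exact hfm a (fun he => hl (he ▸ ha))
  have hnm1 : r ∉ (List.range' (r+1) (m-r-1)).reverse := by
    simp only [List.mem_reverse, List.mem_range']
    rintro ⟨j, hj, hrj⟩
    omega
  have hnm2 : r ∉ (List.range r).reverse := by simp
  rw [rowWord_eq_flatMap, rowWord_eq_flatMap, range_reverse_split hr,
    List.flatMap_append, List.flatMap_append, List.flatMap_cons, List.flatMap_cons,
    hU _ hnm1, hU _ hnm2, hmid]
  rw [List.set_append, if_neg (by omega), Nat.add_sub_cancel_left,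
    List.set_append, if_pos (by rw [rwF_length]; exact hc)]

lemma rowWord_getElem (m : ℕ) (ν : ℕ → ℕ) (S : ℕ → ℕ → ℕ) {r j : ℕ} (hr : r < m)
    (hj : j < ν (r+1)) :
    (rowWord m ν S)[(((List.range' (r+1) (m-r-1)).reverse).flatMap (rwF ν S)).length + j]? =
      some (S r j) := by
  rw [rowWord_split m ν S hr]
  rw [List.getElem?_append_right (Nat.le_add_right _ _)]
  simp only [Nat.add_sub_cancel_left]
  rw [List.getElem?_append]
  rw [if_pos (by rw [rwF_length]; exact hj)]
  simp [rwF, List.getElem?_map, List.getElem?_range, hj]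

/-- If `T` is an SSYT of shape `λ` (a partition with at most `m` rows) with
entries in `[m]` and `w` is its row reading word, then whenever `E_i(w) ≠ 0` (resp.
`F_i(w) ≠ 0`), the result is the row reading word of an SSYT of the same shape `λ` with
entries in `[m]`. -/
theorem crystal_ops_preserve_ssyt (m : ℕ) (hm : 1 ≤ m) (ν : ℕ → ℕ)
    (hν : IsPartitionFn ν) (hrows : ∀ j, m < j → ν j = 0)
    (i : ℕ) (hi : 1 ≤ i) (him : i < m)
    (S : ℕ → ℕ → ℕ) (hS : IsSSYTFn ν m S) :
    (∀ v, Eop i (rowWord m ν S) = some v →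
      ∃ S' : ℕ → ℕ → ℕ, IsSSYTFn ν m S' ∧ rowWord m ν S' = v) ∧
    (∀ v, Fop i (rowWord m ν S) = some v →
      ∃ S' : ℕ → ℕ → ℕ, IsSSYTFn ν m S' ∧ rowWord m ν S' = v) := by
  obtain ⟨hν0, hνdec, hνfin⟩ := hν
  obtain ⟨hS0, hSbd, hS3, hS4⟩ := hS
  have mono : ∀ r c1 c2, c1 ≤ c2 → c2 < ν (r+1) → S r c1 ≤ S r c2 := by
    intro r c1 c2 hle
    induction c2, hle using Nat.le_induction with
    | base => intro _; exact le_rfl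
    | succ c2 h ih =>
      intro hlt
      exact le_trans (ih (by omega)) (hS3 r c2 hlt)
  have νmono : ∀ j k, 1 ≤ j → j ≤ k → ν k ≤ ν j := by
    intro j k hj hle
    induction k, hle using Nat.le_induction with
    | base => exact le_rfl
    | succ k h ih =>
      have hd := hνdec (k-1)
      rw [show k - 1 + 2 = k + 1 by omega, show k - 1 + 1 = k by omega] at hd
      exact le_trans hd ih
  constructor
  · -- E operator
    intro v hv
    cases hh : (unmatchedOpens i (rowWord m ν S)).head? with
    | none => simp [Eop, hh] at hv
    | some p =>
      simp only [Eop, hh] at hv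
      obtain rfl : v = (rowWord m ν S).set p i := (Option.some.inj hv).symm
      have hpmem : p ∈ unmatchedOpens i (rowWord m ν S) :=
        List.mem_of_mem_head? (by rw [hh]; rfl)
      have hpr := List.mem_filter.mp hpmem
      have hplen : p < (rowWord m ν S).length := List.mem_range.mp hpr.1
      have hP : IsUnmatchedOpen i (rowWord m ν S) p := of_decide_eq_true hpr.2
      obtain ⟨r, c, hrm, hcν, hpeq⟩ := rowWord_decomp m ν S hplen
      set U : List ℕ := ((List.range' (r+1) (m-r-1)).reverse).flatMap (rwF ν S) with hUdef
      have hval : S r c = i + 1 := by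
        have h1 := rowWord_getElem m ν S hrm hcν
        rw [← hUdef, ← hpeq, hP.1] at h1
        exact (Option.some.inj h1).symm
      have hpw : List.Pairwise (· < ·) (unmatchedOpens i (rowWord m ν S)) :=
        List.Pairwise.filter _ (List.pairwise_lt_range)
      have claimA : 1 ≤ c → S r (c-1) ≤ i := by
        intro hc1
        by_contra hcon
        push_neg at hcon
        have hle2 : S r (c-1) ≤ S r c := mono r (c-1) c (by omega) hcν
        have heq1 : S r (c-1) = i + 1 := by omega
        have hg : (rowWord m ν S)[U.length + (c-1)]? = some (i+1) := by
          rw [← heq1]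
          have := rowWord_getElem m ν S hrm (show c - 1 < ν (r+1) by omega)
          rwa [← hUdef] at this
        have hlt : U.length + (c-1) < (rowWord m ν S).length := by omega
        have hge : (rowWord m ν S)[U.length + (c-1)] = i + 1 :=
          aux_getElem_of_getElem? hg hlt
        have hsd : suffD i (rowWord m ν S) (U.length + (c-1)) =
            suffD i (rowWord m ν S) p + 1 := by
          have h2 := suffD_succ_open hlt hge
          rwa [show U.length + (c-1) + 1 = p by omega] at h2
        have hopen : IsUnmatchedOpen i (rowWord m ν S) (U.length + (c-1)) := by
          refine ⟨hg, ?_⟩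
          intro q hq hltq
          rcases eq_or_lt_of_le (show p ≤ q by omega) with heq2 | hq2
          · rw [← heq2, hsd]; linarith
          · have h5 := hP.2 q hq hq2
            rw [hsd]; linarith
        have hmem2 : U.length + (c-1) ∈ unmatchedOpens i (rowWord m ν S) :=
          List.mem_filter.mpr ⟨List.mem_range.mpr (by omega), decide_eq_true hopen⟩
        have := aux_head_min hpw hh hmem2
        omega
      have claimB : 1 ≤ r → S (r-1) c < i := by
        intro hr1
        have hr1' : r - 1 + 1 = r := by omega
        have hr2' : r - 1 + 2 = r + 1 := by omega
        have hup := hS4 (r-1) c (by rw [hr2']; exact hcν)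
        rw [hr1'] at hup
        by_contra hcon
        push_neg at hcon
        have heqi : S (r-1) c = i := by omega
        have hcB : c ∈ (Finset.range (ν (r+1))).filter (fun c' => S r c' = i+1) := by
          simp [Finset.mem_filter, Finset.mem_range, hcν, hval]
        set b := ((Finset.range (ν (r+1))).filter (fun c' => S r c' = i+1)).max' ⟨c, hcB⟩ with hbdef
        have hbB := Finset.max'_mem ((Finset.range (ν (r+1))).filter (fun c' => S r c' = i+1)) ⟨c, hcB⟩
        rw [← hbdef, Finset.mem_filter, Finset.mem_range] at hbB
        obtain ⟨hbν, hbval⟩ := hbB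
        have hcb : c ≤ b := Finset.le_max' _ _ hcB
        have hbmax : ∀ c', c' < ν (r+1) → S r c' = i+1 → c' ≤ b := by
          intro c' k1 k2
          exact Finset.le_max' _ _ (by simp [Finset.mem_filter, Finset.mem_range, k1, k2])
        have hν1r : ν (r+1) ≤ ν r := by
          have hd := hνdec (r-1)
          rwa [hr2', hr1'] at hd
        have hνr1 : b + 1 ≤ ν r := by omega
        have F1 : ∀ c', c ≤ c' → c' ≤ b → S r c' = i + 1 := by
          intro c' k1 k2
          have g1 := mono r c c' k1 (by omega)
          have g2 := mono r c' b k2 hbν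
          omega
        have F2 : ∀ c', b < c' → c' < ν (r+1) → S r c' ≠ i + 1 ∧ i + 1 ≤ S r c' := by
          intro c' k1 k2
          have g1 := mono r c c' (by omega) k2
          exact ⟨fun he => by have := hbmax c' k2 he; omega, by omega⟩
        have F3 : ∀ c', c' ≤ b → S (r-1) c' ≤ i := by
          intro c' k1
          have g1 := mono (r-1) c' b k1 (by rw [hr1']; omega)
          have g2 := hS4 (r-1) b (by rw [hr2']; exact hbν)
          rw [hr1'] at g2
          omega
        have F4 : ∀ c', c ≤ c' → c' ≤ b → S (r-1) c' = i := by
          intro c' k1 k2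
          have g1 := F3 c' k2
          have g2 := mono (r-1) c c' k1 (by rw [hr1']; omega)
          omega
        have hrr : List.range r = List.range (r-1) ++ [r-1] := by
          have hx := List.range_succ (n := r-1)
          rwa [Nat.succ_eq_add_one, hr1'] at hx
        have hVr : ((List.range r).reverse).flatMap (rwF ν S) =
            rwF ν S (r-1) ++ ((List.range (r-1)).reverse).flatMap (rwF ν S) := by
          rw [hrr, List.reverse_append]
          simp [List.flatMap_cons]
        set seg : List ℕ := (rwF ν S r).drop c ++ (rwF ν S (r-1)).take (b+1) with hsegdef
        have hwdec2 : rowWord m ν S =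
            (U ++ (rwF ν S r).take c) ++
              (seg ++ ((rwF ν S (r-1)).drop (b+1) ++
                ((List.range (r-1)).reverse).flatMap (rwF ν S))) := by
          rw [rowWord_split m ν S hrm, ← hUdef, hVr, hsegdef]
          conv_lhs => rw [← List.take_append_drop c (rwF ν S r),
            ← List.take_append_drop (b+1) (rwF ν S (r-1))]
          simp only [List.append_assoc]
        have hlen_take : (U ++ (rwF ν S r).take c).length = p := by
          simp only [List.length_append, List.length_take, rwF_length]
          omega
        have hseglen : seg.length = (ν (r+1) - c) + (b+1) := by
          simp only [hsegdef, List.length_append, List.length_drop, List.length_take,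
            rwF_length, hr1']
          omega
        have hsd1 := suffD_split' (i := i) hwdec2 hlen_take.symm
        have hs1 : (rwF ν S r).drop c = (List.range' c (ν (r+1) - c)).map (S r) := by
          unfold rwF
          exact aux_map_range_drop (S r) c (ν (r+1)) (le_of_lt hcν)
        have hs2 : (rwF ν S (r-1)).take (b+1) = (List.range (b+1)).map (S (r-1)) := by
          unfold rwF
          rw [hr1']
          exact aux_map_range_take (S (r-1)) (b+1) (ν r) hνr1
        have e1 : ν (r+1) - c = (b+1-c) + (ν (r+1) - (b+1)) := by omega
        have hc1 : ((List.range' c (ν (r+1) - c)).map (S r)).count (i+1) = b+1-c := by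
          rw [e1, aux_range'_split, show c + (b+1-c) = b+1 by omega, List.map_append,
            List.count_append]
          rw [aux_count_eq_len (S r) (i+1) c (b+1-c) (fun c' u1 u2 => F1 c' u1 (by omega))]
          rw [aux_count_eq_zero (S r) (i+1) (b+1) (ν (r+1) - (b+1))
            (fun c' u1 u2 => (F2 c' (by omega) (by omega)).1)]
          omega
        have hc2 : ((List.range' c (ν (r+1) - c)).map (S r)).count i = 0 := by
          rw [e1, aux_range'_split, show c + (b+1-c) = b+1 by omega, List.map_append,
            List.count_append]
          rw [aux_count_eq_zero (S r) i c (b+1-c)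
            (fun c' u1 u2 => by have := F1 c' u1 (by omega); omega)]
          rw [aux_count_eq_zero (S r) i (b+1) (ν (r+1) - (b+1))
            (fun c' u1 u2 => by have := (F2 c' (by omega) (by omega)).2; omega)]
        have hc3 : ((List.range (b+1)).map (S (r-1))).count (i+1) = 0 := by
          rw [List.range_eq_range']
          exact aux_count_eq_zero (S (r-1)) (i+1) 0 (b+1)
            (fun c' u1 u2 => by have := F3 c' (by omega); omega)
        have hc4 : b+1-c ≤ ((List.range (b+1)).map (S (r-1))).count i := by
          rw [show List.range (b+1) = List.range' 0 c ++ List.range' c (b+1-c) by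
            rw [List.range_eq_range', show b+1 = c + (b+1-c) by omega, aux_range'_split,
              Nat.zero_add]
            congr 1
            congr 1
            omega]
          rw [List.map_append, List.count_append,
            aux_count_eq_len (S (r-1)) i c (b+1-c) (fun c' u1 u2 => F4 c' u1 (by omega))]
          omega
        have hDseg : (seg.count (i+1) : ℤ) - seg.count i ≤ 0 := by
          rw [hsegdef, List.count_append, List.count_append, hs1, hs2, hc1, hc2, hc3]
          have := hc4
          push_cast
          omega
        have hlenw : p + seg.length ≤ (rowWord m ν S).length := by
          have h6 : (rowWord m ν S).length =
              (U ++ (rwF ν S r).take c).length + (seg.length +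
                ((rwF ν S (r-1)).drop (b+1) ++
                  ((List.range (r-1)).reverse).flatMap (rwF ν S)).length) := by
            rw [hwdec2]
            simp only [List.length_append]
          omega
        have hfin := hP.2 (p + seg.length) hlenw (by omega)
        linarith
      -- build the new tableau
      refine ⟨fun r' c' => if r' = r ∧ c' = c then i else S r' c', ⟨?_, ?_, ?_, ?_⟩, ?_⟩
      · intro r' c' hout
        dsimp only
        by_cases he : r' = r ∧ c' = c
        · obtain ⟨rfl, rfl⟩ := he
          exact absurd hcν hout
        · rw [if_neg he]
          exact hS0 r' c' hout
      · intro r' c' hin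
        dsimp only
        by_cases he : r' = r ∧ c' = c
        · rw [if_pos he]; omega
        · rw [if_neg he]; exact hSbd r' c' hin
      · intro r' c' hin
        dsimp only
        by_cases h1 : r' = r ∧ c' = c
        · obtain ⟨rfl, rfl⟩ := h1
          rw [if_pos ⟨rfl, rfl⟩, if_neg (by simp)]
          have := hS3 r' c' hin
          omega
        · by_cases h2 : r' = r ∧ c' + 1 = c
          · obtain ⟨rfl, h2'⟩ := h2
            rw [if_neg h1, if_pos ⟨rfl, h2'⟩]
            have := claimA (by omega)
            rwa [show c - 1 = c' by omega] at this
          · rw [if_neg h1, if_neg h2]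
            exact hS3 r' c' hin
      · intro r' c' hin
        dsimp only
        by_cases h1 : r' = r ∧ c' = c
        · obtain ⟨rfl, rfl⟩ := h1
          rw [if_pos ⟨rfl, rfl⟩, if_neg (by omega)]
          have := hS4 r' c' hin
          omega
        · by_cases h2 : r' + 1 = r ∧ c' = c
          · obtain ⟨h2a, rfl⟩ := h2
            rw [if_neg h1, if_pos ⟨h2a, rfl⟩]
            have := claimB (by omega)
            rwa [show r - 1 = r' by omega] at this
          · rw [if_neg h1, if_neg h2]
            exact hS4 r' c' hin
      · have h7 := rowWord_update m ν S r c i hrm hcν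
        rw [← hUdef, ← hpeq] at h7
        exact h7
  · -- F operator
    intro v hv
    cases hh : (unmatchedCloses i (rowWord m ν S)).getLast? with
    | none => simp [Fop, hh] at hv
    | some p =>
      simp only [Fop, hh] at hv
      obtain rfl : v = (rowWord m ν S).set p (i+1) := (Option.some.inj hv).symm
      have hpmem : p ∈ unmatchedCloses i (rowWord m ν S) := aux_mem_getLast? hh
      have hpr := List.mem_filter.mp hpmem
      have hplen : p < (rowWord m ν S).length := List.mem_range.mp hpr.1
      have hP : IsUnmatchedClose i (rowWord m ν S) p := of_decide_eq_true hpr.2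
      obtain ⟨r, c, hrm, hcν, hpeq⟩ := rowWord_decomp m ν S hplen
      set U : List ℕ := ((List.range' (r+1) (m-r-1)).reverse).flatMap (rwF ν S) with hUdef
      have hval : S r c = i := by
        have h1 := rowWord_getElem m ν S hrm hcν
        rw [← hUdef, ← hpeq, hP.1] at h1
        exact (Option.some.inj h1).symm
      have hpw : List.Pairwise (· < ·) (unmatchedCloses i (rowWord m ν S)) :=
        List.Pairwise.filter _ (List.pairwise_lt_range)
      have claimA' : c + 1 < ν (r+1) → i + 1 ≤ S r (c+1) := by
        intro hc1
        by_contra hcon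
        push_neg at hcon
        have hle2 : S r c ≤ S r (c+1) := hS3 r c hc1
        have heq1 : S r (c+1) = i := by omega
        have hg : (rowWord m ν S)[U.length + (c+1)]? = some i := by
          rw [← heq1]
          have h2 := rowWord_getElem m ν S hrm hc1
          rwa [← hUdef] at h2
        have hlt : U.length + (c+1) < (rowWord m ν S).length := by
          have h6 : (rowWord m ν S).length = U.length + ((rwF ν S r).length +
              (((List.range r).reverse).flatMap (rwF ν S)).length) := by
            rw [rowWord_split m ν S hrm, ← hUdef]
            simp [List.length_append]
          rw [rwF_length] at h6
          omega
        have hge : (rowWord m ν S)[U.length + (c+1)] = i := aux_getElem_of_getElem? hg hlt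
        have hpd : prefD i (rowWord m ν S) (U.length + (c+1) + 1) =
            prefD i (rowWord m ν S) (U.length + (c+1)) + 1 := prefD_succ_close hlt hge
        have hpp : U.length + (c+1) = p + 1 := by omega
        have hclose : IsUnmatchedClose i (rowWord m ν S) (U.length + (c+1)) := by
          refine ⟨hg, ?_⟩
          intro q hq
          rcases eq_or_lt_of_le hq with heq2 | hq2
          · rw [heq2, hpd]
            linarith
          · have h5 := hP.2 q (by omega)
            rw [hpd, hpp]
            linarith
        have hmem2 : U.length + (c+1) ∈ unmatchedCloses i (rowWord m ν S) :=
          List.mem_filter.mpr ⟨List.mem_range.mpr (by omega), decide_eq_true hclose⟩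
        have := aux_getLast_max hpw hh hmem2
        omega
      have claimB' : c < ν (r+2) → i + 1 < S (r+1) c := by
        intro hcr
        have hup := hS4 r c hcr
        by_contra hcon
        push_neg at hcon
        have heqi1 : S (r+1) c = i + 1 := by omega
        have hr2m : r + 2 ≤ m := by
          by_contra hcon2
          have := hrows (r+2) (by omega)
          omega
        have hnn : r + 1 + 1 = r + 2 := rfl
        have hcA : c ∈ (Finset.range (c+1)).filter (fun c' => S r c' = i) := by
          simp [Finset.mem_filter, Finset.mem_range, hval]
        set a := ((Finset.range (c+1)).filter (fun c' => S r c' = i)).min' ⟨c, hcA⟩ with hadef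
        have haA := Finset.min'_mem ((Finset.range (c+1)).filter (fun c' => S r c' = i)) ⟨c, hcA⟩
        rw [← hadef, Finset.mem_filter, Finset.mem_range] at haA
        obtain ⟨hac, haval⟩ := haA
        have hac' : a ≤ c := by omega
        have hamin : ∀ c', c' < c + 1 → S r c' = i → a ≤ c' := by
          intro c' k1 k2
          exact Finset.min'_le _ _ (by simp [Finset.mem_filter, Finset.mem_range, k1, k2])
        have G1 : ∀ c', a ≤ c' → c' ≤ c → S r c' = i := by
          intro c' k1 k2
          have g1 := mono r a c' k1 (by omega)
          have g2 := mono r c' c k2 hcν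
          omega
        have G2 : ∀ c', c' < a → S r c' ≠ i := by
          intro c' k1
          exact fun he => by have := hamin c' (by omega) he; omega
        have G3 : ∀ c', a ≤ c' → c' < ν (r+2) → i < S (r+1) c' := by
          intro c' k1 k2
          have g1 : S (r+1) a ≤ S (r+1) c' := mono (r+1) a c' k1 (by rw [hnn]; exact k2)
          have g2 := hS4 r a (by omega)
          omega
        have G4 : ∀ c', a ≤ c' → c' ≤ c → S (r+1) c' = i + 1 := by
          intro c' k1 k2
          have g1 := G3 c' k1 (by omega)
          have g2 : S (r+1) c' ≤ S (r+1) c := mono (r+1) c' c k2 (by rw [hnn]; exact hcr)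
          omega
        have hU2 : List.range' (r+1) (m-r-1) = (r+1) :: List.range' (r+2) (m-r-2) := by
          rw [show m - r - 1 = (m - r - 2) + 1 by omega, List.range'_succ]
        set U2 : List ℕ := ((List.range' (r+2) (m-r-2)).reverse).flatMap (rwF ν S) with hU2def
        have hUsplit : U = U2 ++ rwF ν S (r+1) := by
          rw [hUdef, hU2, List.reverse_cons, List.flatMap_append, hU2def]
          simp [List.flatMap_cons]
        set seg : List ℕ := (rwF ν S (r+1)).drop a ++ (rwF ν S r).take (c+1) with hsegdef
        have hwd : rowWord m ν S =
            (U2 ++ (rwF ν S (r+1)).take a) ++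
              (seg ++
                ((rwF ν S r).drop (c+1) ++ ((List.range r).reverse).flatMap (rwF ν S))) := by
          rw [rowWord_split m ν S hrm, ← hUdef, hUsplit, hsegdef]
          conv_lhs => rw [← List.take_append_drop a (rwF ν S (r+1)),
            ← List.take_append_drop (c+1) (rwF ν S r)]
          simp only [List.append_assoc]
        have hlen_take : (U2 ++ (rwF ν S (r+1)).take a).length = U2.length + a := by
          simp only [List.length_append, List.length_take, rwF_length, hnn]
          omega
        have hseglen : seg.length = (ν (r+2) - a) + (c+1) := by
          simp only [hsegdef, List.length_append, List.length_drop, List.length_take,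
            rwF_length, hnn]
          omega
        have hUlen : U.length = U2.length + ν (r+2) := by
          rw [hUsplit]
          simp only [List.length_append, rwF_length, hnn]
        have hp1 : p + 1 = (U2.length + a) + seg.length := by omega
        have hs1 : (rwF ν S (r+1)).drop a = (List.range' a (ν (r+2) - a)).map (S (r+1)) := by
          unfold rwF
          rw [hnn]
          exact aux_map_range_drop (S (r+1)) a (ν (r+2)) (by omega)
        have hs2 : (rwF ν S r).take (c+1) = (List.range (c+1)).map (S r) := by
          unfold rwF
          exact aux_map_range_take (S r) (c+1) (ν (r+1)) (by omega)
        have e1 : ν (r+2) - a = (c+1-a) + (ν (r+2) - (c+1)) := by omega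
        have hc1 : ((List.range' a (ν (r+2) - a)).map (S (r+1))).count i = 0 :=
          aux_count_eq_zero (S (r+1)) i a (ν (r+2) - a)
            (fun c' u1 u2 => by have := G3 c' u1 (by omega); omega)
        have hc2 : c+1-a ≤ ((List.range' a (ν (r+2) - a)).map (S (r+1))).count (i+1) := by
          rw [e1, aux_range'_split, show a + (c+1-a) = c+1 by omega, List.map_append,
            List.count_append]
          rw [aux_count_eq_len (S (r+1)) (i+1) a (c+1-a) (fun c' u1 u2 => G4 c' u1 (by omega))]
          omega
        have hc3 : ((List.range (c+1)).map (S r)).count i = c+1-a := by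
          rw [show List.range (c+1) = List.range' 0 a ++ List.range' a (c+1-a) by
            rw [List.range_eq_range', show c+1 = a + (c+1-a) by omega, aux_range'_split,
              Nat.zero_add]
            congr 1
            congr 1
            omega]
          rw [List.map_append, List.count_append]
          rw [aux_count_eq_zero (S r) i 0 a (fun c' u1 u2 => G2 c' (by omega))]
          rw [aux_count_eq_len (S r) i a (c+1-a) (fun c' u1 u2 => G1 c' u1 (by omega))]
          omega
        have hDseg : (seg.count i : ℤ) - seg.count (i+1) ≤ 0 := by
          rw [hsegdef, List.count_append, List.count_append, hs1, hs2, hc1, hc3]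
          have := hc2
          push_cast
          omega
        have hsd1 := prefD_split' (i := i) hwd hlen_take.symm
        rw [← hp1] at hsd1
        have hfin := hP.2 (U2.length + a) (by omega)
        linarith
      -- build the new tableau
      refine ⟨fun r' c' => if r' = r ∧ c' = c then i + 1 else S r' c', ⟨?_, ?_, ?_, ?_⟩, ?_⟩
      · intro r' c' hout
        dsimp only
        by_cases he : r' = r ∧ c' = c
        · obtain ⟨rfl, rfl⟩ := he
          exact absurd hcν hout
        · rw [if_neg he]
          exact hS0 r' c' hout
      · intro r' c' hin
        dsimp only
        by_cases he : r' = r ∧ c' = c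
        · rw [if_pos he]; omega
        · rw [if_neg he]; exact hSbd r' c' hin
      · intro r' c' hin
        dsimp only
        by_cases h1 : r' = r ∧ c' = c
        · obtain ⟨rfl, rfl⟩ := h1
          rw [if_pos ⟨rfl, rfl⟩, if_neg (by simp)]
          exact claimA' hin
        · by_cases h2 : r' = r ∧ c' + 1 = c
          · obtain ⟨rfl, h2'⟩ := h2
            rw [if_neg h1, if_pos ⟨rfl, h2'⟩]
            have := mono r' c' c (by omega) hcν
            omega
          · rw [if_neg h1, if_neg h2]
            exact hS3 r' c' hin
      · intro r' c' hin
        dsimp only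
        by_cases h1 : r' = r ∧ c' = c
        · obtain ⟨rfl, rfl⟩ := h1
          rw [if_pos ⟨rfl, rfl⟩, if_neg (by omega)]
          exact claimB' hin
        · by_cases h2 : r' + 1 = r ∧ c' = c
          · obtain ⟨h2a, rfl⟩ := h2
            rw [if_neg h1, if_pos ⟨h2a, rfl⟩]
            have h8 := hS4 r' c' hin
            rw [h2a] at h8
            omega
          · rw [if_neg h1, if_neg h2]
            exact hS4 r' c' hin
      · have h7 := rowWord_update m ν S r c (i+1) hrm hcν
        rw [← hUdef, ← hpeq] at h7
        exact h7
end
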